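/- arXiv:1008.1837 — 3 statements merged into one kernel-verified Lean document; each statement's English description precedes it below -/
import Mathlib

section
/- Let (G,γ) be a Z²-colored multigraph and (G',γ) a subgraph of (G,γ). Suppose adding a colored edge ij to G strictly increases the Z²-rank, and ij has both endpoints contained within a single connected component of G'. Then adding ij to G' also strictly increases the Z²-rank of (G',γ). -/
open Finset

section Defs
variable {V E : Type} [Fintype V] [DecidableEq V] [Fintype E] [DecidableEq E]

/-- Signed incidence of edge `e` at vertex `v`. -/
def incid (th hd : E → V) (e : E) (v : V) : ℤ :=
  (if hd e = v then 1 else 0) - (if th e = v then 1 else 0)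

/-- `x : E → ℤ` is a cycle (1-chain with zero boundary) supported on the edge set `S`. -/
def IsCycle (th hd : E → V) (S : Finset E) (x : E → ℤ) : Prop :=
  (∀ e ∉ S, x e = 0) ∧ ∀ v : V, ∑ e, x e * incid th hd e v = 0

/-- Signed color-sum of a chain. -/
def rho (γ : E → ℤ × ℤ) (x : E → ℤ) : ℤ × ℤ := ∑ e, x e • γ e

def q2 (p : ℤ × ℤ) : ℚ × ℚ := ((p.1 : ℚ), (p.2 : ℚ))

/-- The ℤ²-rank of the colored subgraph with edge set `S`. -/
noncomputable def zrank (th hd : E → V) (γ : E → ℤ × ℤ) (S : Finset E) : ℕ :=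
  Module.finrank ℚ (Submodule.span ℚ (q2 '' (rho γ '' {x | IsCycle th hd S x})))

/-- Adjacency via an edge in `S`. -/
def adjS (th hd : E → V) (S : Finset E) (u v : V) : Prop :=
  ∃ e ∈ S, (th e = u ∧ hd e = v) ∨ (th e = v ∧ hd e = u)

/-- Vertices spanned by the edge set `S`. -/
def verts (th hd : E → V) (S : Finset E) : Finset V := S.image th ∪ S.image hd

/-- Number of connected components of the subgraph induced by the edge set `S`
(on the vertices it spans). -/
noncomputable def ncomp (th hd : E → V) (S : Finset E) : ℕ :=
  Nat.card (Quotient (Relation.EqvGen.setoid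
    (fun a b : {v : V // v ∈ verts th hd S} => adjS th hd S a.1 b.1)))

/-- The subgraph with edge set `S` is connected and spans all vertices. -/
def Conn (th hd : E → V) (S : Finset E) : Prop :=
  ∀ u v : V, Relation.EqvGen (adjS th hd S) u v

/-- The function `f(G') = n' + rk_{ℤ²}(G') − c'`. -/
noncomputable def fZ (th hd : E → V) (γ : E → ℤ × ℤ) (S : Finset E) : ℤ :=
  ((verts th hd S).card : ℤ) + (zrank th hd γ S : ℤ) - (ncomp th hd S : ℤ)

end Defs

/-- Edge set of the complete multigraph `K_n^{6,4}`. -/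
def KE (n : ℕ) : Type :=
  ({p : Fin n × Fin n // p.1 < p.2} × Fin 6) ⊕ (Fin n × Fin 4)

instance (n : ℕ) : Fintype (KE n) := by unfold KE; infer_instance
instance (n : ℕ) : DecidableEq (KE n) := by unfold KE; infer_instance

def Kt (n : ℕ) : KE n → Fin n := Sum.elim (fun q => q.1.1.1) (fun q => q.1)
def Kh (n : ℕ) : KE n → Fin n := Sum.elim (fun q => q.1.1.2) (fun q => q.1)

section Aux
variable {V E : Type} [Fintype V] [DecidableEq V] [Fintype E] [DecidableEq E]

lemma pathchain (th hd : E → V) (S : Finset E) {u v : V}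
    (h : Relation.EqvGen (adjS th hd S) u v) :
    ∃ x : E → ℤ, (∀ e ∉ S, x e = 0) ∧
      ∀ w, ∑ e, x e * incid th hd e w =
        (if v = w then 1 else 0) - (if u = w then 1 else 0) := by
  induction h with
  | rel a b hab =>
    obtain ⟨e, heS, he⟩ := hab
    rcases he with ⟨hta, htb⟩ | ⟨hta, htb⟩
    · refine ⟨fun e' => if e' = e then 1 else 0, ?_, ?_⟩
      · intro e' he'; simp only [ite_eq_right_iff]; rintro rfl; exact absurd heS he'
      · intro w
        rw [Finset.sum_eq_single e]
        · simp [incid, hta, htb]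
        · intro b _ hb; simp [hb]
        · simp
    · refine ⟨fun e' => if e' = e then -1 else 0, ?_, ?_⟩
      · intro e' he'; simp only [ite_eq_right_iff]; rintro rfl; exact absurd heS he'
      · intro w
        rw [Finset.sum_eq_single e]
        · simp only [incid, hta, htb]; split_ifs <;> ring
        · intro b _ hb; simp [hb]
        · simp
  | refl a => exact ⟨0, fun _ _ => rfl, fun w => by simp⟩
  | symm a b _ ih =>
    obtain ⟨x, hs, hb⟩ := ih
    refine ⟨-x, fun e he => by simp [hs e he], fun w => ?_⟩
    have := hb w
    simp only [Pi.neg_apply, neg_mul, Finset.sum_neg_distrib]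
    rw [this]; ring
  | trans a b c _ _ ih1 ih2 =>
    obtain ⟨x, hxs, hxb⟩ := ih1
    obtain ⟨y, hys, hyb⟩ := ih2
    refine ⟨x + y, fun e he => by simp [hxs e he, hys e he], fun w => ?_⟩
    simp only [Pi.add_apply, add_mul, Finset.sum_add_distrib, hxb w, hyb w]
    ring

lemma q2_add (p q : ℤ × ℤ) : q2 (p + q) = q2 p + q2 q := by
  simp [q2, Prod.ext_iff]

lemma q2_smul (n : ℤ) (p : ℤ × ℤ) : q2 (n • p) = (n : ℚ) • q2 p := by
  simp [q2, Prod.ext_iff]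

lemma rho_decomp (γ : E → ℤ × ℤ) (y x₀ : E → ℤ) (c : ℤ) :
    rho γ y = c • rho γ x₀ + rho γ (fun e => y e - c * x₀ e) := by
  simp only [rho, Finset.smul_sum, ← Finset.sum_add_distrib, smul_smul, sub_smul]
  congr 1; ext e; simp [smul_smul]; ring

lemma span_mono_of_subset (th hd : E → V) (γ : E → ℤ × ℤ) {S T : Finset E} (hST : S ⊆ T) :
    Submodule.span ℚ (q2 '' (rho γ '' {x | IsCycle th hd S x})) ≤
    Submodule.span ℚ (q2 '' (rho γ '' {x | IsCycle th hd T x})) := by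
  apply Submodule.span_mono
  apply Set.image_mono
  apply Set.image_mono
  intro x hx
  exact ⟨fun e he => hx.1 e (fun h => he (hST h)), hx.2⟩

end Aux

/-- If adding the colored edge `e₀` to `G` strictly increases the ℤ²-rank, and the endpoints
of `e₀` lie in a single connected component of the subgraph `S`, then adding `e₀` to `S`
strictly increases its ℤ²-rank. -/
theorem statement2 {V E : Type} [Fintype V] [DecidableEq V] [Fintype E] [DecidableEq E]
    (th hd : E → V) (γ : E → ℤ × ℤ) (e₀ : E) (S : Finset E) (heS : e₀ ∉ S)
    (hrk : zrank th hd γ (Finset.univ.erase e₀) < zrank th hd γ Finset.univ)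
    (ht : th e₀ ∈ verts th hd S) (hh : hd e₀ ∈ verts th hd S)
    (hcomp : Relation.EqvGen (adjS th hd S) (th e₀) (hd e₀)) :
    zrank th hd γ S < zrank th hd γ (insert e₀ S) := by
  classical
  obtain ⟨x, hxs, hxb⟩ := pathchain th hd S hcomp.symm
  set x₀ : E → ℤ := fun e => x e + (if e = e₀ then 1 else 0) with hx₀def
  have hx₀e₀ : x₀ e₀ = 1 := by simp [hx₀def, hxs e₀ heS]
  have hx₀cyc : IsCycle th hd (insert e₀ S) x₀ := by
    constructor
    · intro e he
      simp only [Finset.mem_insert, not_or] at he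
      simp [hx₀def, hxs e he.2, he.1]
    · intro w
      have h1 : ∑ e, x₀ e * incid th hd e w
          = (∑ e, x e * incid th hd e w) + ∑ e, (if e = e₀ then (1:ℤ) else 0) * incid th hd e w := by
        rw [← Finset.sum_add_distrib]; congr 1; ext e; rw [hx₀def]; ring
      rw [h1, hxb w, Finset.sum_eq_single e₀]
      · simp only [incid]; split_ifs <;> ring
      · intro b _ hb; simp [hb]
      · simp
  -- the key spans
  set KS := Submodule.span ℚ (q2 '' (rho γ '' {z | IsCycle th hd S z})) with hKS
  set KI := Submodule.span ℚ (q2 '' (rho γ '' {z | IsCycle th hd (insert e₀ S) z})) with hKI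
  have hmem : q2 (rho γ x₀) ∈ KI :=
    Submodule.subset_span ⟨rho γ x₀, ⟨x₀, hx₀cyc, rfl⟩, rfl⟩
  have hle : KS ≤ KI := span_mono_of_subset th hd γ (Finset.subset_insert _ _)
  have hnot : q2 (rho γ x₀) ∉ KS := by
    intro hmemS
    -- then span over univ ≤ span over erase, contradicting hrk
    have hSE : S ⊆ Finset.univ.erase e₀ := fun e he =>
      Finset.mem_erase.mpr ⟨fun h => heS (h ▸ he), Finset.mem_univ e⟩
    have hmemE : q2 (rho γ x₀) ∈
        Submodule.span ℚ (q2 '' (rho γ '' {z | IsCycle th hd (Finset.univ.erase e₀) z})) :=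
      span_mono_of_subset th hd γ hSE hmemS
    have hUE : Submodule.span ℚ (q2 '' (rho γ '' {z | IsCycle th hd (Finset.univ : Finset E) z})) ≤
        Submodule.span ℚ (q2 '' (rho γ '' {z | IsCycle th hd (Finset.univ.erase e₀) z})) := by
      rw [Submodule.span_le]
      rintro _ ⟨_, ⟨y, hy, rfl⟩, rfl⟩
      have hz : IsCycle th hd (Finset.univ.erase e₀) (fun e => y e - y e₀ * x₀ e) := by
        constructor
        · intro e he
          have : e = e₀ := by simpa using he
          subst this
          simp [hx₀e₀]
        · intro w
          have h2 : ∑ e, (y e - y e₀ * x₀ e) * incid th hd e w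
              = (∑ e, y e * incid th hd e w) - y e₀ * ∑ e, x₀ e * incid th hd e w := by
            rw [Finset.mul_sum, ← Finset.sum_sub_distrib]; congr 1; ext e; ring
          rw [h2, hy.2 w, hx₀cyc.2 w]; ring
      have hrw : q2 (rho γ y) = (y e₀ : ℚ) • q2 (rho γ x₀)
          + q2 (rho γ (fun e => y e - y e₀ * x₀ e)) := by
        rw [rho_decomp γ y x₀ (y e₀), q2_add, q2_smul]
      rw [SetLike.mem_coe, hrw]
      exact Submodule.add_mem _ (Submodule.smul_mem _ _ hmemE)
        (Submodule.subset_span ⟨_, ⟨_, hz, rfl⟩, rfl⟩)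
    have := Submodule.finrank_mono hUE
    exact absurd hrk (by simp only [zrank]; omega)
  have hlt : KS < KI := lt_of_le_of_ne hle (fun h => hnot (h ▸ hmem))
  simpa [zrank, hKS, hKI] using Submodule.finrank_lt_finrank_of_lt hlt
end

section
/- The family of (1,1,k)-colored subgraphs of (K_n^{6,4},γ), where k is the Z²-rank of the whole colored ground set, forms the set of bases of a matroid on the edge set; equivalently, f(G') = n' + rk_{Z²}(G') − c' is a nonnegative, monotone, submodular function whose induced matroid (via Edmonds–Rota) has the (1,1,k)-graphs as bases. -/
open Finset

namespace Stmt8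
set_option linter.unusedSectionVars false
open Module Submodule Relation
variable {V E : Type} [Fintype V] [DecidableEq V] [Fintype E] [DecidableEq E]
def incidQ (th hd : E → V) (e : E) : V → ℚ := fun v => ((incid th hd e v : ℤ) : ℚ)
def chi (v : V) : V → ℚ := fun w => if v = w then 1 else 0
lemma incidQ_eq (th hd : E → V) (e : E) :
    incidQ th hd e = chi (hd e) - chi (th e) := by
  funext w; simp [incidQ, chi, incid]
noncomputable def wdim (th hd : E → V) (S : Finset E) : ℕ :=
  finrank ℚ (span ℚ (incidQ th hd '' (S : Set E)))
variable {th hd : E → V} {γ : E → ℤ × ℤ} {S : Finset E}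
lemma adjS_mem_left {u v : V} (h : adjS th hd S u v) : u ∈ verts th hd S := by
  obtain ⟨e, he, h | h⟩ := h
  · exact Finset.mem_union_left _ (Finset.mem_image.2 ⟨e, he, h.1⟩)
  · exact Finset.mem_union_right _ (Finset.mem_image.2 ⟨e, he, h.2⟩)
lemma adjS_symm {u v : V} (h : adjS th hd S u v) : adjS th hd S v u := by
  obtain ⟨e, he, h | h⟩ := h
  · exact ⟨e, he, Or.inr h⟩
  · exact ⟨e, he, Or.inl h⟩
lemma adjS_mem_right {u v : V} (h : adjS th hd S u v) : v ∈ verts th hd S :=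
  adjS_mem_left (adjS_symm h)
lemma eqvgen_lift {a b : {v : V // v ∈ verts th hd S}}
    (h : EqvGen (fun a b : {v : V // v ∈ verts th hd S} => adjS th hd S a.1 b.1) a b) :
    EqvGen (adjS th hd S) a.1 b.1 := by
  induction h with
  | rel _ _ h => exact EqvGen.rel _ _ h
  | refl _ => exact EqvGen.refl _
  | symm _ _ _ ih => exact EqvGen.symm _ _ ih
  | trans _ _ _ _ _ ih1 ih2 => exact EqvGen.trans _ _ _ ih1 ih2
lemma eqvgen_mem {u v : V} (h : EqvGen (adjS th hd S) u v) :
    u = v ∨ ∃ (hu : u ∈ verts th hd S) (hv : v ∈ verts th hd S),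
      EqvGen (fun a b : {v : V // v ∈ verts th hd S} => adjS th hd S a.1 b.1) ⟨u, hu⟩ ⟨v, hv⟩ := by
  induction h with
  | rel x y h => exact Or.inr ⟨adjS_mem_left h, adjS_mem_right h, EqvGen.rel _ _ h⟩
  | refl x => exact Or.inl rfl
  | symm x y _ ih =>
    rcases ih with rfl | ⟨hx, hy, ih⟩
    · exact Or.inl rfl
    · exact Or.inr ⟨hy, hx, EqvGen.symm _ _ ih⟩
  | trans x y z _ _ ih1 ih2 =>
    rcases ih1 with rfl | ⟨hx, hy, ih1⟩
    · exact ih2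
    · rcases ih2 with rfl | ⟨hy', hz, ih2⟩
      · exact Or.inr ⟨hx, hy, ih1⟩
      · refine Or.inr ⟨hx, hz, EqvGen.trans _ _ _ ih1 ?_⟩
        convert ih2 using 2
lemma chi_diff_mem {u v : V} (h : EqvGen (adjS th hd S) u v) :
    chi v - chi u ∈ span ℚ (incidQ th hd '' (S : Set E)) := by
  induction h with
  | rel x y h =>
    obtain ⟨e, he, ⟨h1, h2⟩ | ⟨h1, h2⟩⟩ := h
    · have : chi y - chi x = incidQ th hd e := by rw [incidQ_eq, h1, h2]
      rw [this]; exact subset_span ⟨e, he, rfl⟩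
    · have : chi y - chi x = -incidQ th hd e := by rw [incidQ_eq, h1, h2]; abel
      rw [this]; exact neg_mem (subset_span ⟨e, he, rfl⟩)
  | refl x => simp
  | symm x y _ ih =>
    have : chi x - chi y = -(chi y - chi x) := by abel
    rw [this]; exact neg_mem ih
  | trans x y z _ _ ih1 ih2 =>
    have : chi z - chi x = (chi y - chi x) + (chi z - chi y) := by abel
    rw [this]; exact add_mem ih1 ih2

/-- The graphic rank formula. -/
lemma A1 (th hd : E → V) (S : Finset E) :
    wdim th hd S + ncomp th hd S = (verts th hd S).card := by
  classical
  set Vt := verts th hd S with hVt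
  let Vs := {v : V // v ∈ Vt}
  let r' : Vs → Vs → Prop := fun a b => adjS th hd S a.1 b.1
  let sQ : Setoid Vs := Relation.EqvGen.setoid r'
  let Q := Quotient sQ
  haveI : Finite Q := Quotient.finite _
  haveI : Fintype Q := Fintype.ofFinite _
  have hnc : ncomp th hd S = Fintype.card Q := by
    rw [← Nat.card_eq_fintype_card]; rfl
  let mkq : Vs → Q := Quotient.mk sQ
  let Θ1 : (V → ℚ) →ₗ[ℚ] ({v : V // v ∉ Vt} → ℚ) :=
    LinearMap.funLeft ℚ ℚ Subtype.val
  let Θ2 : (V → ℚ) →ₗ[ℚ] (Q → ℚ) :=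
    LinearMap.pi (fun c : Q =>
      ∑ v ∈ Finset.univ.filter (fun v : Vs => mkq v = c), LinearMap.proj v.1)
  let Θ := LinearMap.prod Θ1 Θ2
  have hΘ2 : ∀ (f : V → ℚ) (c : Q),
      Θ2 f c = ∑ v ∈ Finset.univ.filter (fun v : Vs => mkq v = c), f v.1 := by
    intro f c
    simp [Θ2, LinearMap.pi_apply, LinearMap.sum_apply, LinearMap.proj_apply]
  -- the kernel of Θ is the span of the incidence vectors
  have hker : LinearMap.ker Θ = span ℚ (incidQ th hd '' (S : Set E)) := by
    apply le_antisymm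
    · -- hard direction: kernel elements are in the span
      intro f hf
      rw [LinearMap.mem_ker] at hf
      have hf1 : ∀ v : V, v ∉ Vt → f v = 0 := by
        intro v hv
        have := congrFun (congrArg Prod.fst hf) ⟨v, hv⟩
        simpa [Θ, Θ1, LinearMap.funLeft] using this
      have hf2 : ∀ c : Q, ∑ v ∈ Finset.univ.filter (fun v : Vs => mkq v = c), f v.1 = 0 := by
        intro c
        have := congrFun (congrArg Prod.snd hf) c
        rw [← hΘ2 f c]
        simpa [Θ] using this
      let rep : Vs → V := fun v => ((mkq v).out : Vs).1
      have hrep : ∀ v : Vs, EqvGen (adjS th hd S) (rep v) v.1 := by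
        intro v
        have h1 : Quotient.mk sQ ((mkq v).out) = mkq v := Quotient.out_eq _
        have h2 : EqvGen r' ((mkq v).out) v := Quotient.exact h1
        exact eqvgen_lift h2
      have hsum : (∑ v : Vs, f v.1 • (chi v.1 - chi (rep v))) = f := by
        funext w
        have expand : (∑ v : Vs, f v.1 • (chi v.1 - chi (rep v))) w
            = (∑ v : Vs, f v.1 * (if v.1 = w then 1 else 0))
              - (∑ v : Vs, f v.1 * (if rep v = w then 1 else 0)) := by
          rw [Finset.sum_apply, ← Finset.sum_sub_distrib]
          congr 1; funext v
          simp [chi, mul_sub]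
        have t2 : (∑ v : Vs, f v.1 * (if rep v = w then 1 else 0)) = 0 := by
          rw [← Finset.sum_fiberwise Finset.univ mkq
            (fun v : Vs => f v.1 * (if rep v = w then 1 else 0))]
          refine Finset.sum_eq_zero (fun c _ => ?_)
          have : ∀ v ∈ Finset.univ.filter (fun v : Vs => mkq v = c),
              f v.1 * (if rep v = w then 1 else 0)
                = (if (c.out : Vs).1 = w then 1 else 0) * f v.1 := by
            intro v hv
            have hvc : mkq v = c := (Finset.mem_filter.1 hv).2
            rw [mul_comm]
            congr 2
            simp [rep, hvc]
          rw [Finset.sum_congr rfl this, ← Finset.mul_sum, hf2 c, mul_zero]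
        rw [expand, t2, sub_zero]
        by_cases hw : w ∈ Vt
        · rw [Finset.sum_eq_single (⟨w, hw⟩ : Vs)]
          · simp
          · intro v _ hv
            have : v.1 ≠ w := fun h => hv (Subtype.ext h)
            simp [this]
          · intro h; exact absurd (Finset.mem_univ _) h
        · rw [hf1 w hw]
          refine Finset.sum_eq_zero (fun v _ => ?_)
          have : v.1 ≠ w := fun h => hw (h ▸ v.2)
          simp [this]
      rw [← hsum]
      refine sum_mem (fun v _ => smul_mem _ _ ?_)
      exact chi_diff_mem (hrep v)
    · rw [span_le]
      rintro x ⟨e, he, rfl⟩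
      have hth : th e ∈ Vt := Finset.mem_union_left _ (Finset.mem_image.2 ⟨e, he, rfl⟩)
      have hhd : hd e ∈ Vt := Finset.mem_union_right _ (Finset.mem_image.2 ⟨e, he, rfl⟩)
      have h1 : Θ1 (incidQ th hd e) = 0 := by
        funext v
        have h1 : hd e ≠ v.1 := fun h => v.2 (h ▸ hhd)
        have h2 : th e ≠ v.1 := fun h => v.2 (h ▸ hth)
        simp [Θ1, LinearMap.funLeft, incidQ, incid, h1, h2]
      have h2 : Θ2 (incidQ th hd e) = 0 := by
        funext c
        rw [hΘ2]
        by_cases hloop : th e = hd e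
        · refine Finset.sum_eq_zero (fun v _ => ?_)
          simp [incidQ, incid, hloop]
        · have hab : mkq ⟨th e, hth⟩ = mkq ⟨hd e, hhd⟩ :=
            Quotient.sound (EqvGen.rel _ _ ⟨e, he, Or.inl ⟨rfl, rfl⟩⟩)
          have split : ∀ v : Vs, incidQ th hd e v.1
              = (if v = (⟨hd e, hhd⟩ : Vs) then (1:ℚ) else 0)
                - (if v = (⟨th e, hth⟩ : Vs) then 1 else 0) := by
            intro v
            have e1 : (hd e = v.1) ↔ (v = (⟨hd e, hhd⟩ : Vs)) :=
              ⟨fun h => Subtype.ext h.symm, fun h => by rw [h]⟩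
            have e2 : (th e = v.1) ↔ (v = (⟨th e, hth⟩ : Vs)) :=
              ⟨fun h => Subtype.ext h.symm, fun h => by rw [h]⟩
            simp only [incidQ, incid]
            push_cast
            rw [if_congr e1 rfl rfl, if_congr e2 rfl rfl]
          rw [Finset.sum_congr rfl (fun v _ => split v), Finset.sum_sub_distrib,
            Finset.sum_ite_eq' _ (⟨hd e, hhd⟩ : Vs), Finset.sum_ite_eq' _ (⟨th e, hth⟩ : Vs)]
          simp only [Finset.mem_filter, Finset.mem_univ, true_and]
          rw [hab]
          split <;> simp
      have hz : Θ (incidQ th hd e) = 0 := by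
        have h3 : Θ (incidQ th hd e) = (Θ1 (incidQ th hd e), Θ2 (incidQ th hd e)) := rfl
        rw [h3, h1, h2]; rfl
      simpa [LinearMap.mem_ker] using hz
  -- Θ is surjective
  have hsurj : Function.Surjective Θ := by
    rintro ⟨g, h⟩
    let F : V → ℚ := fun v => if hv : v ∈ Vt then
      (if (mkq ⟨v, hv⟩).out = ⟨v, hv⟩ then h (mkq ⟨v, hv⟩) else 0) else g ⟨v, hv⟩
    have hcomp1 : Θ1 F = g := by
      funext v
      simp only [Θ1, LinearMap.funLeft_apply]
      show F v.1 = g v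
      simp only [F]
      rw [dif_neg v.2]
    have hval : ∀ v : Vs, F v.1 = (if (mkq v).out = v then h (mkq v) else 0) := by
      intro v
      simp only [F]
      rw [dif_pos v.2]
    have hcomp2 : Θ2 F = h := by
      funext c
      rw [hΘ2]
      rw [Finset.sum_congr rfl (fun v _ => hval v)]
      rw [Finset.sum_eq_single c.out]
      · have : mkq c.out = c := Quotient.out_eq c
        rw [this]; simp
      · intro v hv hne
        have hvc : mkq v = c := (Finset.mem_filter.1 hv).2
        rw [hvc, if_neg (fun hh => hne hh.symm)]
      · intro hc
        exfalso
        exact hc (Finset.mem_filter.2 ⟨Finset.mem_univ _, Quotient.out_eq c⟩)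
    exact ⟨F, by rw [show Θ F = (Θ1 F, Θ2 F) from rfl, hcomp1, hcomp2]⟩
  -- dimension count
  have hrn := LinearMap.finrank_range_add_finrank_ker Θ
  rw [LinearMap.range_eq_top.mpr hsurj, finrank_top, hker] at hrn
  have hcod : finrank ℚ (({v : V // v ∉ Vt} → ℚ) × (Q → ℚ))
      = (Fintype.card V - Vt.card) + Fintype.card Q := by
    rw [Module.finrank_prod, Module.finrank_fintype_fun_eq_card,
      Module.finrank_fintype_fun_eq_card]
    congr 1
    rw [Fintype.card_subtype_compl, Fintype.card_coe]
  have hdom : finrank ℚ (V → ℚ) = Fintype.card V := Module.finrank_fintype_fun_eq_card ℚ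
  have hle : Vt.card ≤ Fintype.card V := Vt.card_le_univ
  rw [hcod, hdom] at hrn
  rw [hnc]
  have hwd : wdim th hd S = finrank ℚ (span ℚ (incidQ th hd '' (S : Set E))) := rfl
  rw [hwd]
  omega

def phi (th hd : E → V) (γ : E → ℤ × ℤ) (e : E) : (V → ℚ) × (ℚ × ℚ) :=
  (incidQ th hd e, q2 (γ e))

noncomputable def rr (th hd : E → V) (γ : E → ℤ × ℤ) (S : Finset E) : ℕ :=
  finrank ℚ (span ℚ (phi th hd γ '' (S : Set E)))

lemma range_eq_phi (F : E → (V → ℚ) × (ℚ × ℚ)) (S : Finset E) :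
    Set.range (fun e : ↥S => F e.1) = F '' (S : Set E) := by
  ext x; simp

lemma range_eq_fn (F : E → (V → ℚ)) (S : Finset E) :
    Set.range (fun e : ↥S => F e.1) = F '' (S : Set E) := by
  ext x; simp

/-- rank = graphic part + color part -/
lemma A2 (th hd : E → V) (γ : E → ℤ × ℤ) (S : Finset E) :
    rr th hd γ S = wdim th hd S + zrank th hd γ S := by
  classical
  let B : (↥S → ℚ) →ₗ[ℚ] (V → ℚ) :=
    Fintype.linearCombination ℚ (fun e : ↥S => incidQ th hd e.1)
  let Rm : (↥S → ℚ) →ₗ[ℚ] (ℚ × ℚ) :=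
    Fintype.linearCombination ℚ (fun e : ↥S => q2 (γ e.1))
  let Cm : (↥S → ℚ) →ₗ[ℚ] ((V → ℚ) × (ℚ × ℚ)) :=
    Fintype.linearCombination ℚ (fun e : ↥S => phi th hd γ e.1)
  have hrangeB : LinearMap.range B = span ℚ (incidQ th hd '' (S : Set E)) := by
    rw [show LinearMap.range B
      = span ℚ (Set.range (fun e : ↥S => incidQ th hd e.1)) from
        Fintype.range_linearCombination ℚ _, range_eq_fn]
  have hrangeC : LinearMap.range Cm = span ℚ (phi th hd γ '' (S : Set E)) := by
    rw [show LinearMap.range Cm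
      = span ℚ (Set.range (fun e : ↥S => phi th hd γ e.1)) from
        Fintype.range_linearCombination ℚ _, range_eq_phi]
  have hCm : ∀ x : ↥S → ℚ, Cm x = (B x, Rm x) := by
    intro x
    simp only [Cm, B, Rm, Fintype.linearCombination_apply, phi]
    refine Prod.ext ?_ ?_
    · rw [Prod.fst_sum]; simp
    · rw [Prod.snd_sum]; simp
  have hkerC : LinearMap.ker Cm = LinearMap.ker B ⊓ LinearMap.ker Rm := by
    ext x
    simp [LinearMap.mem_ker, hCm, Prod.ext_iff, Prod.mk_eq_zero]
  -- the color space of cycles equals the image of ker B under Rm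
  have hzr : span ℚ (q2 '' (rho γ '' {x | IsCycle th hd S x}))
      = Submodule.map Rm (LinearMap.ker B) := by
    apply le_antisymm
    · rw [span_le]
      rintro _ ⟨_, ⟨x, hx, rfl⟩, rfl⟩
      refine Submodule.mem_map.2 ⟨fun e => (x e.1 : ℚ), ?_, ?_⟩
      · -- boundary is zero
        rw [LinearMap.mem_ker]
        funext v
        simp only [B, Fintype.linearCombination_apply]
        rw [Finset.sum_apply]
        have h1 : ∀ e : ↥S, ((x e.1 : ℚ) • incidQ th hd e.1) v
            = ((x e.1 * incid th hd e.1 v : ℤ) : ℚ) := by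
          intro e; simp [incidQ]
        rw [Finset.sum_congr rfl (fun e _ => h1 e)]
        rw [Finset.sum_coe_sort S (fun e => ((x e * incid th hd e v : ℤ) : ℚ))]
        rw [Finset.sum_subset (Finset.subset_univ S)
          (fun e _ he => by rw [hx.1 e he, zero_mul, Int.cast_zero])]
        rw [← Int.cast_sum, hx.2 v, Int.cast_zero]
        rfl
      · -- the color sum matches
        show Rm _ = q2 (rho γ x)
        simp only [Rm, Fintype.linearCombination_apply]
        have h1 : ∀ e : ↥S, (x e.1 : ℚ) • q2 (γ e.1)
            = q2 (x e.1 • γ e.1) := by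
          intro e
          refine Prod.ext ?_ ?_ <;> simp [q2] <;> push_cast <;> ring
        rw [Finset.sum_congr rfl (fun e _ => h1 e)]
        rw [Finset.sum_coe_sort S (fun e => q2 (x e • γ e))]
        rw [Finset.sum_subset (Finset.subset_univ S)
          (fun e _ he => by rw [hx.1 e he]; simp [q2])]
        unfold rho
        refine Prod.ext ?_ ?_ <;>
          simp [q2, Prod.fst_sum, Prod.snd_sum] <;> push_cast <;> rfl
    · rintro _ ⟨y, hy, rfl⟩
      have hy' : B y = 0 := hy
      set d : ℕ := ∏ e : ↥S, (y e).den with hd_def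
      have hdpos : 0 < d := Finset.prod_pos (fun e _ => (y e).pos)
      have hd0 : (d : ℚ) ≠ 0 := by positivity
      have hdvd : ∀ e : ↥S, ((y e).den : ℕ) ∣ d := fun e =>
        Finset.dvd_prod_of_mem _ (Finset.mem_univ e)
      have key : ∀ e : ↥S, (((y e).num * ((d / (y e).den : ℕ) : ℤ) : ℤ) : ℚ) = d * y e := by
        intro e
        have hden0 : ((y e).den : ℚ) ≠ 0 := by
          exact_mod_cast (y e).den_nz
        have h1 : (((d / (y e).den : ℕ)) : ℚ) = (d : ℚ) / ((y e).den : ℚ) := by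
          rw [Nat.cast_div (hdvd e) hden0]
        rw [Int.cast_mul, Int.cast_natCast, h1]
        calc ((y e).num : ℚ) * ((d : ℚ) / ((y e).den : ℚ))
            = (((y e).num : ℚ) / ((y e).den : ℚ)) * d := by ring
          _ = (d : ℚ) * y e := by rw [Rat.num_div_den]; ring
      let x : E → ℤ := fun e =>
        if h : e ∈ S then (y ⟨e, h⟩).num * ((d / (y ⟨e, h⟩).den : ℕ) : ℤ) else 0
      have hxc : ∀ e : ↥S, ((x e.1 : ℤ) : ℚ) = d * y e := by
        intro e
        simp only [x, dif_pos e.2]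
        exact key e
      have hcyc : IsCycle th hd S x := by
        constructor
        · intro e he; exact dif_neg he
        · intro v
          have hc : ((∑ e, x e * incid th hd e v : ℤ) : ℚ) = 0 := by
            rw [Int.cast_sum]
            rw [← Finset.sum_subset (Finset.subset_univ S)
              (fun e _ he => by simp [x, dif_neg he])]
            rw [← Finset.sum_coe_sort S (fun e => ((x e * incid th hd e v : ℤ) : ℚ))]
            have h2 : ∀ e : ↥S, ((x e.1 * incid th hd e.1 v : ℤ) : ℚ)
                = (d : ℚ) * ((y e • incidQ th hd e.1) v) := by
              intro e
              push_cast
              rw [hxc e]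
              simp only [Pi.smul_apply, smul_eq_mul, incidQ]
              ring
            rw [Finset.sum_congr rfl (fun e _ => h2 e), ← Finset.mul_sum]
            rw [show (∑ e : ↥S, (y e • incidQ th hd e.1) v)
              = (∑ e : ↥S, y e • incidQ th hd e.1) v from (Finset.sum_apply v _ _).symm]
            rw [show (∑ e : ↥S, y e • incidQ th hd e.1) = B y from rfl, hy']
            simp
          exact_mod_cast hc
      have hq : q2 (rho γ x) = (d : ℚ) • Rm y := by
        have hRm : Rm y = ∑ e : ↥S, y e • q2 (γ e.1) := rfl
        have hcast : ∀ (p : ℤ × ℤ) (c : ℤ), q2 (c • p) = ((c : ℚ)) • q2 p := by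
          intro p c
          refine Prod.ext ?_ ?_ <;> simp [q2] <;> push_cast <;> ring
        have hq2sum : ∀ (f : E → ℤ × ℤ), q2 (∑ e, f e) = ∑ e, q2 (f e) := by
          intro f
          refine Prod.ext ?_ ?_ <;>
            simp [q2, Prod.fst_sum, Prod.snd_sum] <;> push_cast <;> rfl
        unfold rho
        rw [hq2sum, hRm, Finset.smul_sum]
        rw [← Finset.sum_subset (Finset.subset_univ S)
          (fun e _ he => by simp [x, dif_neg he, q2, Prod.ext_iff])]
        rw [← Finset.sum_coe_sort S (fun e => q2 (x e • γ e))]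
        refine Finset.sum_congr rfl (fun e _ => ?_)
        rw [hcast, hxc e, mul_smul, smul_smul]
      have hRy : Rm y = (d : ℚ)⁻¹ • q2 (rho γ x) := by
        rw [hq, smul_smul, inv_mul_cancel₀ hd0, one_smul]
      rw [hRy]
      exact Submodule.smul_mem _ _ (subset_span ⟨_, ⟨x, hcyc, rfl⟩, rfl⟩)
  -- rank-nullity bookkeeping
  have h1 : finrank ℚ (LinearMap.range Cm) + finrank ℚ (LinearMap.ker Cm) = S.card := by
    rw [LinearMap.finrank_range_add_finrank_ker,
      Module.finrank_fintype_fun_eq_card ℚ, Fintype.card_coe]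
  have h2 : finrank ℚ (LinearMap.range B) + finrank ℚ (LinearMap.ker B) = S.card := by
    rw [LinearMap.finrank_range_add_finrank_ker,
      Module.finrank_fintype_fun_eq_card ℚ, Fintype.card_coe]
  let R' := Rm.domRestrict (LinearMap.ker B)
  have h3 : finrank ℚ (LinearMap.range R') + finrank ℚ (LinearMap.ker R')
      = finrank ℚ (LinearMap.ker B) := by
    rw [LinearMap.finrank_range_add_finrank_ker]
  have h4 : LinearMap.range R' = Submodule.map Rm (LinearMap.ker B) :=
    LinearMap.range_domRestrict _ _
  have e1 : LinearMap.ker R' = Submodule.comap (LinearMap.ker B).subtype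
      (LinearMap.ker Rm ⊓ LinearMap.ker B) := by
    rw [LinearMap.ker_domRestrict, Submodule.comap_inf,
      Submodule.comap_subtype_self, inf_top_eq]
  have h5 : finrank ℚ (LinearMap.ker R')
      = finrank ℚ (LinearMap.ker Rm ⊓ LinearMap.ker B : Submodule ℚ (↥S → ℚ)) := by
    rw [e1]
    exact (Submodule.comapSubtypeEquivOfLe inf_le_right).finrank_eq
  have h6 : finrank ℚ (LinearMap.ker Cm)
      = finrank ℚ (LinearMap.ker Rm ⊓ LinearMap.ker B : Submodule ℚ (↥S → ℚ)) := by
    rw [hkerC, inf_comm]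
  have hrr : rr th hd γ S = finrank ℚ (LinearMap.range Cm) := by
    rw [hrangeC]; unfold rr; rfl
  have hwd : wdim th hd S = finrank ℚ (LinearMap.range B) := by
    rw [hrangeB]; unfold wdim; rfl
  have hzrk : zrank th hd γ S = finrank ℚ (LinearMap.range R') := by
    rw [h4, ← hzr]; unfold zrank; rfl
  omega

lemma fZ_eq_rr (th hd : E → V) (γ : E → ℤ × ℤ) (S : Finset E) :
    fZ th hd γ S = (rr th hd γ S : ℤ) := by
  have h1 := A1 th hd S
  have h2 := A2 th hd γ S
  unfold fZ
  omega

instance : FiniteDimensional ℚ ((V → ℚ) × (ℚ × ℚ)) := by infer_instance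

lemma rr_mono {S T : Finset E} (h : S ⊆ T) (th hd : E → V) (γ : E → ℤ × ℤ) :
    rr th hd γ S ≤ rr th hd γ T :=
  Submodule.finrank_mono (span_mono (Set.image_mono (by exact_mod_cast h)))

lemma rr_le_card (th hd : E → V) (γ : E → ℤ × ℤ) (S : Finset E) :
    rr th hd γ S ≤ S.card := by
  have h1 : phi th hd γ '' (S : Set E) = ((S.image (phi th hd γ) : Finset _) : Set _) := by
    simp [Finset.coe_image]
  have h2 : rr th hd γ S ≤ (S.image (phi th hd γ)).card := by
    unfold rr
    rw [h1]
    exact finrank_span_finset_le_card _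
  exact le_trans h2 (Finset.card_image_le)

lemma rr_submod (th hd : E → V) (γ : E → ℤ × ℤ) (S T : Finset E) :
    rr th hd γ (S ∪ T) + rr th hd γ (S ∩ T) ≤ rr th hd γ S + rr th hd γ T := by
  have hsup : span ℚ (phi th hd γ '' ((S ∪ T : Finset E) : Set E))
      = span ℚ (phi th hd γ '' (S : Set E)) ⊔ span ℚ (phi th hd γ '' (T : Set E)) := by
    rw [Finset.coe_union, Set.image_union, Submodule.span_union]
  have hinf : span ℚ (phi th hd γ '' ((S ∩ T : Finset E) : Set E))
      ≤ span ℚ (phi th hd γ '' (S : Set E)) ⊓ span ℚ (phi th hd γ '' (T : Set E)) := by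
    refine le_inf ?_ ?_ <;> refine span_mono (Set.image_mono ?_)
    · exact_mod_cast Finset.inter_subset_left
    · exact_mod_cast Finset.inter_subset_right
  have heq := Submodule.finrank_sup_add_finrank_inf_eq
    (span ℚ (phi th hd γ '' (S : Set E))) (span ℚ (phi th hd γ '' (T : Set E)))
  have h1 : rr th hd γ (S ∪ T) ≤ finrank ℚ
      (span ℚ (phi th hd γ '' (S : Set E)) ⊔ span ℚ (phi th hd γ '' (T : Set E)) :
        Submodule ℚ _) := by
    unfold rr; rw [hsup]
  have h2 : rr th hd γ (S ∩ T) ≤ finrank ℚ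
      (span ℚ (phi th hd γ '' (S : Set E)) ⊓ span ℚ (phi th hd γ '' (T : Set E)) :
        Submodule ℚ _) := Submodule.finrank_mono hinf
  unfold rr at *
  omega

lemma rr_sdiff {S' S : Finset E} (h : S' ⊆ S) (th hd : E → V) (γ : E → ℤ × ℤ) :
    rr th hd γ S ≤ rr th hd γ S' + (S \ S').card := by
  have h1 : S' ∪ (S \ S') = S := Finset.union_sdiff_of_subset h
  have h2 := rr_submod th hd γ S' (S \ S')
  have h3 := rr_le_card th hd γ (S \ S')
  have h4 : rr th hd γ S ≤ rr th hd γ (S' ∪ (S \ S')) := by rw [h1]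
  omega

lemma zrank_mono {S T : Finset E} (h : S ⊆ T) (th hd : E → V) (γ : E → ℤ × ℤ) :
    zrank th hd γ S ≤ zrank th hd γ T := by
  refine Submodule.finrank_mono (span_mono (Set.image_mono (Set.image_mono ?_)))
  intro x hx
  exact ⟨fun e he => hx.1 e (fun hS => he (h hS)), hx.2⟩

lemma conn_of_subsingleton (th hd : E → V) (S : Finset E)
    (hverts : verts th hd S = Finset.univ)
    (hsub : Subsingleton (Quotient (Relation.EqvGen.setoid
      (fun a b : {v : V // v ∈ verts th hd S} => adjS th hd S a.1 b.1)))) :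
    Conn th hd S := by
  intro u v
  have hu : u ∈ verts th hd S := hverts ▸ Finset.mem_univ u
  have hv : v ∈ verts th hd S := hverts ▸ Finset.mem_univ v
  let sQ := Relation.EqvGen.setoid
    (fun a b : {v : V // v ∈ verts th hd S} => adjS th hd S a.1 b.1)
  have : Quotient.mk sQ ⟨u, hu⟩ = Quotient.mk sQ ⟨v, hv⟩ := Subsingleton.elim _ _
  exact eqvgen_lift (Quotient.exact this)

lemma subsingleton_of_conn (th hd : E → V) (S : Finset E) (hconn : Conn th hd S) :
    Subsingleton (Quotient (Relation.EqvGen.setoid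
      (fun a b : {v : V // v ∈ verts th hd S} => adjS th hd S a.1 b.1))) := by
  constructor
  intro x y
  induction x using Quotient.ind with | _ a =>
  induction y using Quotient.ind with | _ b =>
  rcases eqvgen_mem (hconn a.1 b.1) with heq | ⟨hu, hv, hr⟩
  · have : a = b := Subtype.ext heq
    rw [this]
  · refine Quotient.sound ?_
    have ha : (⟨a.1, hu⟩ : {v : V // v ∈ verts th hd S}) = a := Subtype.ext rfl
    have hb : (⟨b.1, hv⟩ : {v : V // v ∈ verts th hd S}) = b := Subtype.ext rfl
    rw [← ha, ← hb]
    exact hr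

lemma ncomp_le (th hd : E → V) (S : Finset E) :
    ncomp th hd S ≤ (verts th hd S).card := by
  unfold ncomp
  have h1 : Nat.card (Quotient (Relation.EqvGen.setoid
      (fun a b : {v : V // v ∈ verts th hd S} => adjS th hd S a.1 b.1)))
      ≤ Nat.card {v : V // v ∈ verts th hd S} :=
    Nat.card_le_card_of_surjective _ Quotient.mk_surjective
  have h2 : Nat.card {v : V // v ∈ verts th hd S} = (verts th hd S).card := by
    rw [Nat.card_eq_fintype_card, Fintype.card_coe]
  omega

lemma ncomp_pos (th hd : E → V) (S : Finset E) (h : (verts th hd S).Nonempty) :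
    1 ≤ ncomp th hd S := by
  obtain ⟨v, hv⟩ := h
  unfold ncomp
  haveI : Nonempty {v : V // v ∈ verts th hd S} := ⟨⟨v, hv⟩⟩
  haveI : Nonempty (Quotient (Relation.EqvGen.setoid
      (fun a b : {v : V // v ∈ verts th hd S} => adjS th hd S a.1 b.1))) :=
    Nonempty.map (Quotient.mk _) inferInstance
  exact Nat.card_pos

lemma ncomp_empty_verts (th hd : E → V) (S : Finset E) (h : verts th hd S = ∅) :
    ncomp th hd S = 0 := by
  unfold ncomp
  haveI : IsEmpty {v : V // v ∈ verts th hd S} := by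
    constructor; rintro ⟨v, hv⟩; rw [h] at hv; exact absurd hv (Finset.notMem_empty v)
  haveI : IsEmpty (Quotient (Relation.EqvGen.setoid
      (fun a b : {v : V // v ∈ verts th hd S} => adjS th hd S a.1 b.1))) := by
    constructor; intro q; induction q using Quotient.ind with | _ a => exact IsEmpty.elim ‹_› a
  simp [Nat.card_eq_fintype_card]

lemma ncomp_eq_one (th hd : E → V) (S : Finset E) (hne : (verts th hd S).Nonempty)
    (hconn : Conn th hd S) : ncomp th hd S = 1 := by
  obtain ⟨v, hv⟩ := hne
  unfold ncomp
  rw [Nat.card_eq_one_iff_unique]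
  exact ⟨subsingleton_of_conn th hd S hconn, ⟨Quotient.mk _ ⟨v, hv⟩⟩⟩
end Stmt8

open Stmt8


/-- `f(G') = n' + rk_{ℤ²}(G') − c'` on edge-subsets of `K_n^{6,4}` is nonnegative, monotone
and submodular, and the bases of the matroid it induces (via the Edmonds–Rota construction)
are exactly the `(1,1,k)`-graphs, where `k` is the ℤ²-rank of the whole colored ground set. -/
theorem statement8 (n k : ℕ) (hn : 1 ≤ n) (γ : KE n → ℤ × ℤ)
    (hk : zrank (Kt n) (Kh n) γ Finset.univ = k) :
    (∀ S : Finset (KE n), 0 ≤ fZ (Kt n) (Kh n) γ S) ∧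
    (∀ S T : Finset (KE n), S ⊆ T → fZ (Kt n) (Kh n) γ S ≤ fZ (Kt n) (Kh n) γ T) ∧
    (∀ S T : Finset (KE n),
      fZ (Kt n) (Kh n) γ (S ∪ T) + fZ (Kt n) (Kh n) γ (S ∩ T) ≤
        fZ (Kt n) (Kh n) γ S + fZ (Kt n) (Kh n) γ T) ∧
    (∀ S : Finset (KE n),
      (fZ (Kt n) (Kh n) γ S = fZ (Kt n) (Kh n) γ Finset.univ ∧
        ∀ S' ⊆ S, (S'.card : ℤ) ≤ fZ (Kt n) (Kh n) γ S') ↔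
      (Conn (Kt n) (Kh n) S ∧ (S.card : ℤ) = (n : ℤ) - 1 + k ∧
        zrank (Kt n) (Kh n) γ S = k)) := by
  classical
  have hverts_univ : verts (Kt n) (Kh n) (Finset.univ : Finset (KE n)) = Finset.univ := by
    apply Finset.eq_univ_of_forall
    intro v
    exact Finset.mem_union_left _ (Finset.mem_image.2 ⟨Sum.inr (v, 0), Finset.mem_univ _, rfl⟩)
  have hconn_univ : Conn (Kt n) (Kh n) (Finset.univ : Finset (KE n)) := by
    intro u v
    rcases lt_trichotomy u v with hlt | heq | hlt
    · exact Relation.EqvGen.rel _ _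
        ⟨Sum.inl ⟨⟨(u, v), hlt⟩, 0⟩, Finset.mem_univ _, Or.inl ⟨rfl, rfl⟩⟩
    · rw [heq]; exact Relation.EqvGen.refl _
    · exact Relation.EqvGen.rel _ _
        ⟨Sum.inl ⟨⟨(v, u), hlt⟩, 0⟩, Finset.mem_univ _, Or.inr ⟨rfl, rfl⟩⟩
  have hvne : (verts (Kt n) (Kh n) (Finset.univ : Finset (KE n))).Nonempty := by
    rw [hverts_univ]; exact ⟨⟨0, hn⟩, Finset.mem_univ _⟩
  have hncomp_univ : ncomp (Kt n) (Kh n) (Finset.univ : Finset (KE n)) = 1 :=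
    ncomp_eq_one _ _ _ hvne hconn_univ
  have hfZ : ∀ S : Finset (KE n), fZ (Kt n) (Kh n) γ S = (rr (Kt n) (Kh n) γ S : ℤ) :=
    fun S => fZ_eq_rr _ _ _ S
  have hfZu : fZ (Kt n) (Kh n) γ Finset.univ = (n : ℤ) + k - 1 := by
    unfold fZ
    rw [hverts_univ, hncomp_univ, hk, Finset.card_univ, Fintype.card_fin]
    norm_num
  refine ⟨?_, ?_, ?_, ?_⟩
  · intro S
    have h1 := A1 (Kt n) (Kh n) S
    unfold fZ
    omega
  · intro S T hST
    rw [hfZ, hfZ]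
    exact_mod_cast rr_mono hST (Kt n) (Kh n) γ
  · intro S T
    rw [hfZ, hfZ, hfZ, hfZ]
    exact_mod_cast rr_submod (Kt n) (Kh n) γ S T
  · intro S
    constructor
    · rintro ⟨h1, h2⟩
      have hSle : (S.card : ℤ) ≤ (n : ℤ) + k - 1 := by
        have h3 := h2 S (subset_refl S)
        rw [h1, hfZu] at h3
        exact h3
      have hge : fZ (Kt n) (Kh n) γ S ≤ (S.card : ℤ) := by
        rw [hfZ]
        exact_mod_cast rr_le_card (Kt n) (Kh n) γ S
      have h3 : fZ (Kt n) (Kh n) γ S = (n : ℤ) + k - 1 := by rw [h1, hfZu]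
      have hcard : (S.card : ℤ) = (n : ℤ) - 1 + k := by omega
      have hzle : zrank (Kt n) (Kh n) γ S ≤ k := by
        rw [← hk]
        exact zrank_mono (Finset.subset_univ S) (Kt n) (Kh n) γ
      have hA1 := A1 (Kt n) (Kh n) S
      have hvle : (verts (Kt n) (Kh n) S).card ≤ n := by
        simpa using Finset.card_le_univ (verts (Kt n) (Kh n) S)
      by_cases hemp : verts (Kt n) (Kh n) S = ∅
      · have hc0 := ncomp_empty_verts (Kt n) (Kh n) S hemp
        have ha0 : (verts (Kt n) (Kh n) S).card = 0 := by rw [hemp]; rfl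
        have hkey : n = 1 ∧ zrank (Kt n) (Kh n) γ S = k := by
          unfold fZ at h3
          omega
        refine ⟨?_, hcard, hkey.2⟩
        intro u v
        have huv : u = v := by
          apply Fin.ext
          have hu := u.2
          have hv := v.2
          omega
        rw [huv]; exact Relation.EqvGen.refl _
      · have hne : (verts (Kt n) (Kh n) S).Nonempty := Finset.nonempty_iff_ne_empty.2 hemp
        have hc1 := ncomp_pos (Kt n) (Kh n) S hne
        have hcle := ncomp_le (Kt n) (Kh n) S
        have hkey : (verts (Kt n) (Kh n) S).card = n ∧ ncomp (Kt n) (Kh n) S = 1 ∧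
            zrank (Kt n) (Kh n) γ S = k := by
          unfold fZ at h3
          omega
        have hvu : verts (Kt n) (Kh n) S = Finset.univ :=
          Finset.eq_univ_of_card _ (by rw [hkey.1, Fintype.card_fin])
        have hsub : Subsingleton (Quotient (Relation.EqvGen.setoid
            (fun a b : {v : Fin n // v ∈ verts (Kt n) (Kh n) S} =>
              adjS (Kt n) (Kh n) S a.1 b.1))) := by
          have hnc := hkey.2.1
          unfold ncomp at hnc
          exact (Nat.card_eq_one_iff_unique.mp hnc).1
        exact ⟨conn_of_subsingleton _ _ _ hvu hsub, hcard, hkey.2.2⟩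
    · rintro ⟨hconn, hcard, hz⟩
      have hA1 := A1 (Kt n) (Kh n) S
      have hvle : (verts (Kt n) (Kh n) S).card ≤ n := by
        simpa using Finset.card_le_univ (verts (Kt n) (Kh n) S)
      have hac : ((verts (Kt n) (Kh n) S).card : ℤ) - (ncomp (Kt n) (Kh n) S : ℤ)
          = (n : ℤ) - 1 := by
        by_cases hemp : verts (Kt n) (Kh n) S = ∅
        · have hc0 := ncomp_empty_verts (Kt n) (Kh n) S hemp
          have ha0 : (verts (Kt n) (Kh n) S).card = 0 := by rw [hemp]; rfl
          have hn1 : n = 1 := by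
            by_contra hn2
            have h2n : 2 ≤ n := by omega
            have h01 : ((⟨0, by omega⟩ : Fin n) : Fin n) ≠ ⟨1, by omega⟩ := by
              simp [Fin.ext_iff]
            rcases eqvgen_mem (hconn ⟨0, by omega⟩ ⟨1, by omega⟩) with heq | ⟨hu, _, _⟩
            · exact h01 heq
            · rw [hemp] at hu; exact absurd hu (Finset.notMem_empty _)
          rw [ha0, hc0, hn1]
          norm_num
        · have hne : (verts (Kt n) (Kh n) S).Nonempty := Finset.nonempty_iff_ne_empty.2 hemp
          have hc1 := ncomp_eq_one (Kt n) (Kh n) S hne hconn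
          have hvu : verts (Kt n) (Kh n) S = Finset.univ := by
            by_cases hn1 : n = 1
            · apply Finset.eq_univ_of_forall
              intro v
              obtain ⟨w, hw⟩ := hne
              have hvw : v = w := by
                apply Fin.ext
                have h1 := v.2
                have h2 := w.2
                omega
              rw [hvw]; exact hw
            · have h2n : 2 ≤ n := by omega
              apply Finset.eq_univ_of_forall
              intro v
              obtain ⟨w, hwne⟩ : ∃ w : Fin n, w ≠ v := by
                by_cases hv0 : v = ⟨0, by omega⟩
                · exact ⟨⟨1, by omega⟩, by rw [hv0]; simp [Fin.ext_iff]⟩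
                · exact ⟨⟨0, by omega⟩, fun he => hv0 he.symm⟩
              rcases eqvgen_mem (hconn v w) with heq | ⟨hu, _, _⟩
              · exact absurd heq.symm hwne
              · exact hu
          rw [hc1, hvu, Finset.card_univ, Fintype.card_fin]
          norm_num
      constructor
      · rw [hfZu]
        unfold fZ
        rw [hz]
        omega
      · intro S' hS'
        have h4 : (rr (Kt n) (Kh n) γ S : ℤ) = (S.card : ℤ) := by
          rw [← hfZ]
          unfold fZ
          rw [hz]
          omega
        have h5 := rr_sdiff hS' (Kt n) (Kh n) γ
        have h6 : (S \ S').card + S'.card = S.card :=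
          Finset.card_sdiff_add_card_eq_card hS'
        rw [hfZ]
        have h7 := rr_mono hS' (Kt n) (Kh n) γ
        omega
end

section
/- A Z²-colored multigraph (G,γ) with n vertices is a (2,2,k)-graph (i.e., has exactly 2n−2+2k edges where k = rk_{Z²}(G,γ), and every edge-induced subgraph with n' vertices, m' edges, c' components satisfies m' ≤ 2n' − 2 + 2·rk_{Z²}(G',γ) − 2(c'−1)) if and only if its edge set is the disjoint union of two spanning (1,1,k)-graphs. -/
open Finset

section Aux
open Finset Module

variable {V E : Type} [Fintype V] [DecidableEq V] [Fintype E] [DecidableEq E]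

/-- The boundary map over ℚ. -/
noncomputable def bdry (th hd : E → V) : (E → ℚ) →ₗ[ℚ] (V → ℚ) where
  toFun x v := ∑ e, x e * (incid th hd e v : ℚ)
  map_add' x y := by
    funext v
    simp [add_mul, Finset.sum_add_distrib]
  map_smul' c x := by
    funext v
    simp [Finset.mul_sum, mul_assoc]

/-- The color-sum map over ℚ. -/
noncomputable def rhoQ (γ : E → ℤ × ℤ) : (E → ℚ) →ₗ[ℚ] (ℚ × ℚ) where
  toFun x := ∑ e, x e • q2 (γ e)
  map_add' x y := by simp [add_smul, Finset.sum_add_distrib]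
  map_smul' c x := by simp [Finset.smul_sum, smul_smul]

/-- Chains supported on `S`. -/
def Supp (S : Finset E) : Submodule ℚ (E → ℚ) where
  carrier := {x | ∀ e ∉ S, x e = 0}
  add_mem' hx hy e he := by simp [hx e he, hy e he]
  zero_mem' e he := rfl
  smul_mem' c x hx e he := by simp [hx e he]

/-- The rational cycle space of `S`. -/
noncomputable def Zsp (th hd : E → V) (S : Finset E) : Submodule ℚ (E → ℚ) :=
  Supp S ⊓ LinearMap.ker (bdry th hd)

lemma Supp_mono {S T : Finset E} (h : S ⊆ T) : Supp S ≤ Supp T :=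
  fun x hx e he => hx e (fun hc => he (h hc))

lemma Zsp_mono (th hd : E → V) {S T : Finset E} (h : S ⊆ T) :
    Zsp th hd S ≤ Zsp th hd T :=
  inf_le_inf_right _ (Supp_mono h)

end Aux
section Aux2
set_option linter.unusedSectionVars false
set_option linter.unusedVariables false
open Finset Module

variable {V E : Type} [Fintype V] [DecidableEq V] [Fintype E] [DecidableEq E]

/-- `Supp S` is isomorphic to `S → ℚ`. -/
noncomputable def suppEquiv (S : Finset E) : Supp S ≃ₗ[ℚ] ({e : E // e ∈ S} → ℚ) where
  toFun x := fun e => x.1 e.1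
  invFun y := ⟨fun e => if h : e ∈ S then y ⟨e, h⟩ else 0, fun e he => by simp [he]⟩
  left_inv := by
    rintro ⟨x, hx⟩
    ext e
    by_cases h : e ∈ S <;> simp [h, hx e]
  right_inv := by
    intro y
    ext e
    simp [e.2]
  map_add' x y := rfl
  map_smul' c x := rfl

lemma finrank_Supp (S : Finset E) : finrank ℚ (Supp S) = S.card := by
  rw [(suppEquiv S).finrank_eq]
  simp [Module.finrank_pi]

lemma finrank_Zsp_add (th hd : E → V) (S : Finset E) :
    finrank ℚ (Zsp th hd S) + finrank ℚ (Submodule.map (bdry th hd) (Supp S)) = S.card := by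
  classical
  set g := (bdry th hd).comp (Supp S).subtype with hg
  have hker : Submodule.map (Supp S).subtype (LinearMap.ker g) = Zsp th hd S := by
    rw [hg, LinearMap.ker_comp, Submodule.map_comap_subtype]
    rfl
  have h1 : finrank ℚ (LinearMap.ker g) = finrank ℚ (Zsp th hd S) := by
    rw [← hker]
    exact (Submodule.equivMapOfInjective _ (Submodule.injective_subtype _) _).finrank_eq
  have h2 : LinearMap.range g = Submodule.map (bdry th hd) (Supp S) := by
    rw [hg, LinearMap.range_comp, Submodule.range_subtype]
  have h3 := LinearMap.finrank_range_add_finrank_ker g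
  rw [h2, h1, finrank_Supp] at h3
  omega

end Aux2
section Aux3
set_option linter.unusedSectionVars false
set_option linter.unusedVariables false
open Finset Module

variable {V E : Type} [Fintype V] [DecidableEq V] [Fintype E] [DecidableEq E]

lemma rhoQ_cast (γ : E → ℤ × ℤ) (x : E → ℤ) :
    rhoQ γ (fun e => (x e : ℚ)) = q2 (rho γ x) := by
  have h1 : (rho γ x).1 = ∑ e, x e * (γ e).1 := by
    simp [rho, Prod.fst_sum, smul_eq_mul]
  have h2 : (rho γ x).2 = ∑ e, x e * (γ e).2 := by
    simp [rho, Prod.snd_sum, smul_eq_mul]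
  apply Prod.ext
  · show (∑ e, (x e : ℚ) • q2 (γ e)).1 = ((rho γ x).1 : ℚ)
    rw [h1, Prod.fst_sum]
    simp only [q2, Prod.smul_fst, smul_eq_mul]
    push_cast
    rfl
  · show (∑ e, (x e : ℚ) • q2 (γ e)).2 = ((rho γ x).2 : ℚ)
    rw [h2, Prod.snd_sum]
    simp only [q2, Prod.smul_snd, smul_eq_mul]
    push_cast
    rfl

lemma cast_mem_Zsp (th hd : E → V) (S : Finset E) (x : E → ℤ) (hx : IsCycle th hd S x) :
    (fun e => (x e : ℚ)) ∈ Zsp th hd S := by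
  constructor
  · intro e he
    simp [hx.1 e he]
  · show bdry th hd (fun e => (x e : ℚ)) = 0
    funext v
    have hxv := hx.2 v
    show (∑ e, (x e : ℚ) * (incid th hd e v : ℚ)) = 0
    exact_mod_cast congrArg (fun z : ℤ => (z : ℚ)) hxv

lemma zrank_eq (th hd : E → V) (γ : E → ℤ × ℤ) (S : Finset E) :
    zrank th hd γ S = finrank ℚ (Submodule.map (rhoQ γ) (Zsp th hd S)) := by
  have key : Submodule.span ℚ (q2 '' (rho γ '' {x | IsCycle th hd S x}))
      = Submodule.map (rhoQ γ) (Zsp th hd S) := by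
    apply le_antisymm
    · rw [Submodule.span_le]
      rintro _ ⟨_, ⟨x, hx, rfl⟩, rfl⟩
      exact ⟨fun e => (x e : ℚ), cast_mem_Zsp th hd S x hx, rhoQ_cast γ x⟩
    · rintro _ ⟨y, hy, rfl⟩
      obtain ⟨hy1, hy2⟩ := Submodule.mem_inf.mp hy
      set d : ℕ := ∏ e, (y e).den with hd_def
      have hden : ∀ e : E, (y e).den ∣ d := fun e => Finset.dvd_prod_of_mem _ (mem_univ e)
      have hd0 : (d : ℚ) ≠ 0 := by
        rw [hd_def]
        push_cast
        exact Finset.prod_ne_zero_iff.2 (fun e _ => by exact_mod_cast (y e).den_nz)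
      set x : E → ℤ := fun e => (y e).num * ((d / (y e).den : ℕ) : ℤ) with hx_def
      have hcast : ∀ e, (x e : ℚ) = (d : ℚ) * y e := by
        intro e
        have hdene : ((y e).den : ℚ) ≠ 0 := by exact_mod_cast (y e).den_nz
        have h1 : ((d / (y e).den : ℕ) : ℚ) = (d : ℚ) / ((y e).den : ℚ) :=
          Nat.cast_div (hden e) hdene
        have h0 : (x e : ℚ) = ((y e).num : ℚ) * ((d / (y e).den : ℕ) : ℚ) := by
          rw [hx_def]
          rw [Int.cast_mul, Int.cast_natCast]
        have hy' : ((y e).num : ℚ) = y e * ((y e).den : ℚ) :=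
          (div_eq_iff hdene).1 (Rat.num_div_den (y e))
        rw [h0, h1, hy']
        field_simp
      have hxcycle : IsCycle th hd S x := by
        constructor
        · intro e he
          have h0 : y e = 0 := hy1 e he
          simp [hx_def, h0]
        · intro v
          have hb : (∑ e, y e * (incid th hd e v : ℚ)) = 0 := by
            have := LinearMap.mem_ker.mp hy2
            exact congrFun this v
          have hq : (∑ e, (x e : ℚ) * (incid th hd e v : ℚ)) = 0 := by
            calc (∑ e, (x e : ℚ) * (incid th hd e v : ℚ))
                = (d : ℚ) * ∑ e, y e * (incid th hd e v : ℚ) := by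
                  rw [Finset.mul_sum]
                  exact Finset.sum_congr rfl (fun e _ => by rw [hcast e]; ring
                  )
              _ = 0 := by rw [hb, mul_zero]
          exact_mod_cast hq
      have h2 : q2 (rho γ x) ∈ Submodule.span ℚ (q2 '' (rho γ '' {x | IsCycle th hd S x})) :=
        Submodule.subset_span ⟨_, ⟨x, hxcycle, rfl⟩, rfl⟩
      have h3 : rhoQ γ y = (d : ℚ)⁻¹ • q2 (rho γ x) := by
        rw [← rhoQ_cast]
        have hfun : (fun e => (x e : ℚ)) = (d : ℚ) • y := funext fun e => by
          rw [hcast e]; rfl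
        rw [hfun, map_smul, smul_smul, inv_mul_cancel₀ hd0, one_smul]
      rw [h3]
      exact Submodule.smul_mem _ _ h2
  rw [zrank, key]
end Aux3
section Aux4
set_option linter.unusedSectionVars false
set_option linter.unusedVariables false
open Finset Module
open scoped Classical

variable {V E : Type} [Fintype V] [DecidableEq V] [Fintype E] [DecidableEq E]

/-- Class-summation map onto functions on components. -/
noncomputable def sigmaMap (th hd : E → V) (S : Finset E) :
    ({v : V // v ∈ verts th hd S} → ℚ) →ₗ[ℚ]
    (Quotient (Relation.EqvGen.setoid
      (fun a b : {v : V // v ∈ verts th hd S} => adjS th hd S a.1 b.1)) → ℚ) where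
  toFun f q := ∑ t, if Quotient.mk _ t = q then f t else 0
  map_add' f g := by
    funext q
    rw [Pi.add_apply, ← Finset.sum_add_distrib]
    refine Finset.sum_congr rfl (fun t _ => ?_)
    split <;> simp
  map_smul' c f := by
    funext q
    rw [RingHom.id_apply, Pi.smul_apply, smul_eq_mul, Finset.mul_sum]
    refine Finset.sum_congr rfl (fun t _ => ?_)
    split <;> simp

lemma sigmaMap_surj (th hd : E → V) (S : Finset E) :
    LinearMap.range (sigmaMap th hd S) = ⊤ := by
  rw [eq_top_iff, ← Basis.span_eq (Pi.basisFun ℚ _)]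
  rw [Submodule.span_le]
  rintro _ ⟨q, rfl⟩
  obtain ⟨t0, rfl⟩ := Quotient.exists_rep q
  refine ⟨Pi.single t0 1, ?_⟩
  funext q'
  show (∑ t, if Quotient.mk _ t = q' then Pi.single t0 (1:ℚ) t else 0) = _
  rw [Finset.sum_eq_single_of_mem t0 (mem_univ t0)]
  · rw [Pi.basisFun_apply]
    by_cases h : Quotient.mk _ t0 = q' <;> simp [h, Pi.single_apply, eq_comm]
  · intro t _ ht
    rw [Pi.single_apply, if_neg ht, ite_self]

lemma bdry_supported (th hd : E → V) (S : Finset E) (x : E → ℚ) (hx : x ∈ Supp S)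
    (v : V) (hv : v ∉ verts th hd S) : bdry th hd x v = 0 := by
  show (∑ e, x e * (incid th hd e v : ℚ)) = 0
  refine Finset.sum_eq_zero (fun e _ => ?_)
  by_cases he : e ∈ S
  · have hth : th e ≠ v := fun h => hv (h ▸ mem_union_left _ (mem_image_of_mem th he))
    have hhd : hd e ≠ v := fun h => hv (h ▸ mem_union_right _ (mem_image_of_mem hd he))
    simp [incid, hth, hhd]
  · simp [hx e he]

lemma sum_incid_class (th hd : E → V) (S : Finset E) (e : E) (he : e ∈ S)
    (q : Quotient (Relation.EqvGen.setoid
      (fun a b : {v : V // v ∈ verts th hd S} => adjS th hd S a.1 b.1))) :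
    (∑ t : {v : V // v ∈ verts th hd S},
      if Quotient.mk _ t = q then (incid th hd e t.1 : ℚ) else 0) = 0 := by
  have hth : th e ∈ verts th hd S := mem_union_left _ (mem_image_of_mem th he)
  have hhd : hd e ∈ verts th hd S := mem_union_right _ (mem_image_of_mem hd he)
  set tth : {v : V // v ∈ verts th hd S} := ⟨th e, hth⟩
  set thd : {v : V // v ∈ verts th hd S} := ⟨hd e, hhd⟩
  have hq : Quotient.mk (Relation.EqvGen.setoid
      (fun a b : {v : V // v ∈ verts th hd S} => adjS th hd S a.1 b.1)) thd
      = Quotient.mk _ tth :=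
    Quotient.sound (Relation.EqvGen.rel _ _ ⟨e, he, Or.inr ⟨rfl, rfl⟩⟩)
  have hsplit : ∀ t : {v : V // v ∈ verts th hd S},
      (if Quotient.mk _ t = q then (incid th hd e t.1 : ℚ) else 0)
      = (if Quotient.mk _ t = q then (if hd e = t.1 then (1:ℚ) else 0) else 0)
        - (if Quotient.mk _ t = q then (if th e = t.1 then (1:ℚ) else 0) else 0) := by
    intro t
    by_cases h : Quotient.mk _ t = q <;> simp [h, incid]
  rw [Finset.sum_congr rfl (fun t _ => hsplit t), Finset.sum_sub_distrib]
  have h1 : (∑ t : {v : V // v ∈ verts th hd S},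
      (if Quotient.mk _ t = q then (if hd e = t.1 then (1:ℚ) else 0) else 0))
      = if Quotient.mk _ thd = q then (1:ℚ) else 0 := by
    rw [Finset.sum_eq_single_of_mem thd (mem_univ thd)]
    · by_cases h : Quotient.mk _ thd = q <;> simp [h] <;> rfl
    · intro t _ ht
      have : hd e ≠ t.1 := fun hc => ht (Subtype.ext hc.symm)
      simp [this]
  have h2 : (∑ t : {v : V // v ∈ verts th hd S},
      (if Quotient.mk _ t = q then (if th e = t.1 then (1:ℚ) else 0) else 0))
      = if Quotient.mk _ tth = q then (1:ℚ) else 0 := by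
    rw [Finset.sum_eq_single_of_mem tth (mem_univ tth)]
    · by_cases h : Quotient.mk _ tth = q <;> simp [h] <;> rfl
    · intro t _ ht
      have : th e ≠ t.1 := fun hc => ht (Subtype.ext hc.symm)
      simp [this]
  rw [h1, h2, hq, sub_self]

/-- General helper: injectivity on a submodule preserves finrank of the image. -/
lemma finrank_map_eq_of_injOn {M N : Type*} [AddCommGroup M] [Module ℚ M]
    [AddCommGroup N] [Module ℚ N] (f : M →ₗ[ℚ] N) (p : Submodule ℚ M)
    [FiniteDimensional ℚ p]
    (h : ∀ x ∈ p, f x = 0 → x = 0) :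
    finrank ℚ (Submodule.map f p) = finrank ℚ p := by
  set g := f.comp p.subtype with hg
  have hker : LinearMap.ker g = ⊥ := by
    rw [LinearMap.ker_eq_bot']
    intro m hm
    exact Subtype.ext (h m.1 m.2 hm)
  have hrange : LinearMap.range g = Submodule.map f p := by
    rw [hg, LinearMap.range_comp, Submodule.range_subtype]
  have := LinearMap.finrank_range_add_finrank_ker g
  rw [hker, hrange, finrank_bot, add_zero] at this
  exact this

lemma comp_bound (th hd : E → V) (S : Finset E) :
    finrank ℚ (Submodule.map (bdry th hd) (Supp S)) + ncomp th hd S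
      ≤ (verts th hd S).card := by
  classical
  set r : (V → ℚ) →ₗ[ℚ] ({v : V // v ∈ verts th hd S} → ℚ) :=
    LinearMap.funLeft ℚ ℚ Subtype.val with hr
  -- r is injective on the image of bdry
  have hinj : ∀ y ∈ Submodule.map (bdry th hd) (Supp S), r y = 0 → y = 0 := by
    rintro _ ⟨x, hx, rfl⟩ h0
    funext v
    by_cases hv : v ∈ verts th hd S
    · have := congrFun h0 ⟨v, hv⟩
      exact this
    · exact bdry_supported th hd S x hx v hv
  have heq : finrank ℚ (Submodule.map r (Submodule.map (bdry th hd) (Supp S)))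
      = finrank ℚ (Submodule.map (bdry th hd) (Supp S)) :=
    finrank_map_eq_of_injOn r _ hinj
  -- r-image of bdry-image is inside ker of sigmaMap
  have hle : Submodule.map r (Submodule.map (bdry th hd) (Supp S))
      ≤ LinearMap.ker (sigmaMap th hd S) := by
    rintro _ ⟨_, ⟨x, hx, rfl⟩, rfl⟩
    rw [LinearMap.mem_ker]
    funext q
    show (∑ t, if Quotient.mk _ t = q then (bdry th hd x) t.1 else 0) = 0
    have hswap : (∑ t : {v : V // v ∈ verts th hd S},
        if Quotient.mk _ t = q then (bdry th hd x) t.1 else 0)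
        = ∑ e, x e * (∑ t : {v : V // v ∈ verts th hd S},
            if Quotient.mk _ t = q then (incid th hd e t.1 : ℚ) else 0) := by
      have step1 : (∑ t : {v : V // v ∈ verts th hd S},
          if Quotient.mk _ t = q then (bdry th hd x) t.1 else 0)
          = ∑ t : {v : V // v ∈ verts th hd S}, ∑ e,
              (if Quotient.mk _ t = q then x e * (incid th hd e t.1 : ℚ) else 0) := by
        refine Finset.sum_congr rfl (fun t _ => ?_)
        by_cases h : Quotient.mk _ t = q
        · rw [if_pos h]
          show (∑ e, x e * (incid th hd e t.1 : ℚ)) = _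
          exact Finset.sum_congr rfl (fun e _ => (if_pos h).symm)
        · rw [if_neg h]
          exact (Finset.sum_eq_zero (fun e _ => if_neg h)).symm
      rw [step1, Finset.sum_comm]
      refine Finset.sum_congr rfl (fun e _ => ?_)
      rw [Finset.mul_sum]
      refine Finset.sum_congr rfl (fun t _ => ?_)
      split <;> simp
    rw [hswap]
    refine Finset.sum_eq_zero (fun e _ => ?_)
    by_cases he : e ∈ S
    · rw [sum_incid_class th hd S e he q, mul_zero]
    · rw [hx e he, zero_mul]
  -- dimension count
  haveI : Finite (Quotient (Relation.EqvGen.setoid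
      (fun a b : {v : V // v ∈ verts th hd S} => adjS th hd S a.1 b.1))) :=
    Quotient.finite _
  haveI : Fintype (Quotient (Relation.EqvGen.setoid
      (fun a b : {v : V // v ∈ verts th hd S} => adjS th hd S a.1 b.1))) :=
    Fintype.ofFinite _
  have hrn := LinearMap.finrank_range_add_finrank_ker (sigmaMap th hd S)
  rw [sigmaMap_surj, finrank_top] at hrn
  have hpi1 : finrank ℚ ((Quotient (Relation.EqvGen.setoid
      (fun a b : {v : V // v ∈ verts th hd S} => adjS th hd S a.1 b.1))) → ℚ)
      = ncomp th hd S := by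
    rw [Module.finrank_pi, ncomp, Nat.card_eq_fintype_card]
  have hpi2 : finrank ℚ ({v : V // v ∈ verts th hd S} → ℚ) = (verts th hd S).card := by
    rw [Module.finrank_pi]
    exact Fintype.card_coe _
  have hker := Submodule.finrank_mono hle
  omega

end Aux4
section Aux5
set_option linter.unusedSectionVars false
set_option linter.unusedVariables false
open Finset Module

variable {V E : Type} [Fintype V] [DecidableEq V] [Fintype E] [DecidableEq E]

lemma delta_mem (th hd : E → V) (A : Finset E) {u v : V}
    (h : Relation.EqvGen (adjS th hd A) u v) :
    (fun w => (if v = w then (1:ℚ) else 0) - (if u = w then 1 else 0))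
      ∈ Submodule.map (bdry th hd) (Supp A) := by
  induction h with
  | rel a b hab =>
    obtain ⟨e, he, hcase⟩ := hab
    have hmem : (fun e' => if e' = e then (1:ℚ) else 0) ∈ Supp A := by
      intro e' he'
      show (if e' = e then (1:ℚ) else 0) = 0
      rw [if_neg]
      rintro rfl
      exact he' he
    have hbd : bdry th hd (fun e' => if e' = e then (1:ℚ) else 0)
        = fun w => ((if hd e = w then (1:ℚ) else 0) - (if th e = w then 1 else 0)) := by
      funext w
      show (∑ e', (if e' = e then (1:ℚ) else 0) * (incid th hd e' w : ℚ)) = _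
      rw [Finset.sum_eq_single_of_mem e (mem_univ e)]
      · rw [if_pos rfl, one_mul, incid]
        push_cast
        rfl
      · intro e' _ hne
        rw [if_neg hne, zero_mul]
    rcases hcase with ⟨h1, h2⟩ | ⟨h1, h2⟩
    · subst h1; subst h2
      exact ⟨_, hmem, hbd⟩
    · subst h1; subst h2
      refine ⟨-(fun e' => if e' = e then (1:ℚ) else 0), Submodule.neg_mem _ hmem, ?_⟩
      rw [map_neg, hbd]
      funext w
      simp only [Pi.neg_apply]
      ring
  | refl a =>
    have h0 : (fun w => (if a = w then (1:ℚ) else 0) - (if a = w then 1 else 0))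
        = (0 : V → ℚ) := by
      funext w; ring_nf; rfl
    rw [h0]
    exact Submodule.zero_mem _
  | symm a b hab ih =>
    have h0 : (fun w => (if a = w then (1:ℚ) else 0) - (if b = w then 1 else 0))
        = -(fun w => (if b = w then (1:ℚ) else 0) - (if a = w then 1 else 0)) := by
      funext w; simp only [Pi.neg_apply]; ring
    rw [h0]
    exact Submodule.neg_mem _ ih
  | trans a b c hab hbc ih1 ih2 =>
    have h0 : (fun w => (if c = w then (1:ℚ) else 0) - (if a = w then 1 else 0))
        = (fun w => (if c = w then (1:ℚ) else 0) - (if b = w then 1 else 0))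
          + (fun w => (if b = w then (1:ℚ) else 0) - (if a = w then 1 else 0)) := by
      funext w; simp only [Pi.add_apply]; ring
    rw [h0]
    exact Submodule.add_mem _ ih2 ih1

/-- The sum-of-values functional. -/
noncomputable def sumval : (V → ℚ) →ₗ[ℚ] ℚ where
  toFun f := ∑ v, f v
  map_add' f g := by simp [Finset.sum_add_distrib]
  map_smul' c f := by simp [Finset.mul_sum]

lemma conn_bound (th hd : E → V) (A : Finset E) (hA : Conn th hd A) :
    Fintype.card V ≤ finrank ℚ (Submodule.map (bdry th hd) (Supp A)) + 1 := by
  rcases isEmpty_or_nonempty V with hV | hV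
  · simp [Fintype.card_eq_zero]
  obtain ⟨b⟩ := hV
  have hU : LinearMap.ker (sumval (V := V)) ≤ Submodule.map (bdry th hd) (Supp A) := by
    intro f hf
    have hf0 : (∑ v, f v) = 0 := hf
    have hrep : f = ∑ v, f v •
        (fun w => (if v = w then (1:ℚ) else 0) - (if b = w then 1 else 0)) := by
      funext w
      rw [Finset.sum_apply]
      have hterm : ∀ v : V, (f v • (fun w' => (if v = w' then (1:ℚ) else 0)
          - (if b = w' then 1 else 0))) w
          = (if v = w then f v else 0) - f v * (if b = w then 1 else 0) := by
        intro v
        simp only [Pi.smul_apply, smul_eq_mul, mul_sub]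
        congr 1
        by_cases h : v = w <;> simp [h]
      rw [Finset.sum_congr rfl (fun v _ => hterm v), Finset.sum_sub_distrib]
      rw [Finset.sum_ite_eq' Finset.univ w f, if_pos (mem_univ w), ← Finset.sum_mul, hf0,
        zero_mul, sub_zero]
    rw [hrep]
    exact Submodule.sum_mem _ (fun v _ => Submodule.smul_mem _ _ (delta_mem th hd A (hA b v)))
  have hrange : LinearMap.range (sumval (V := V)) = ⊤ := by
    rw [eq_top_iff]
    rintro c -
    refine ⟨fun v => if v = b then c else 0, ?_⟩
    show (∑ v, if v = b then c else 0) = c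
    rw [Finset.sum_ite_eq' Finset.univ b (fun _ => c), if_pos (mem_univ b)]
  have hrn := LinearMap.finrank_range_add_finrank_ker (sumval (V := V))
  rw [hrange, finrank_top, Module.finrank_self] at hrn
  have hfin : finrank ℚ (V → ℚ) = Fintype.card V := by simp [Module.finrank_pi]
  have hmono := Submodule.finrank_mono hU
  omega

lemma zrank_of_isEmpty (hE : IsEmpty E) (th hd : E → V) (γ : E → ℤ × ℤ) (S : Finset E) :
    zrank th hd γ S = 0 := by
  rw [zrank_eq]
  have h0 : Submodule.map (rhoQ γ) (Zsp th hd S) = ⊥ := by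
    rw [eq_bot_iff]
    rintro _ ⟨y, hy, rfl⟩
    have : rhoQ γ y = 0 := by
      show (∑ e, y e • q2 (γ e)) = 0
      rw [Finset.univ_eq_empty, Finset.sum_empty]
    simp [this]
  rw [h0, finrank_bot]

end Aux5
section Aux6
set_option linter.unusedSectionVars false
set_option linter.unusedVariables false
open Finset Module

variable {V E : Type} [Fintype V] [DecidableEq V] [Fintype E] [DecidableEq E]

lemma side_bound (th hd : E → V) (γ : E → ℤ × ℤ) (k : ℕ) (A : Finset E)
    (hconn : Conn th hd A) (hcard : (A.card : ℤ) = (Fintype.card V : ℤ) - 1 + k)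
    (hzr : zrank th hd γ A = k) (S : Finset E) :
    (S ∩ A).card ≤ zrank th hd γ S
      + finrank ℚ (Submodule.map (bdry th hd) (Supp S)) := by
  classical
  rcases isEmpty_or_nonempty V with hV | hV
  · haveI hE : IsEmpty E := ⟨fun e => hV.false (th e)⟩
    have h0 : zrank th hd γ A = 0 := zrank_of_isEmpty hE th hd γ A
    have hV0 : Fintype.card V = 0 := Fintype.card_eq_zero
    rw [hzr] at h0
    omega
  have hn1 : 1 ≤ Fintype.card V := Fintype.card_pos_iff.mpr hV
  have hZA := finrank_Zsp_add th hd A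
  have hCB := conn_bound th hd A hconn
  have hcard' : A.card + 1 = Fintype.card V + k := by
    have : (A.card : ℤ) + 1 = (Fintype.card V : ℤ) + k := by omega
    exact_mod_cast this
  have hZAle : finrank ℚ (Zsp th hd A) ≤ k := by omega
  have hzrA : finrank ℚ (Submodule.map (rhoQ γ) (Zsp th hd A)) = k := by
    rw [← zrank_eq]; exact hzr
  have hmaple : finrank ℚ (Submodule.map (rhoQ γ) (Zsp th hd A))
      ≤ finrank ℚ (Zsp th hd A) := Submodule.finrank_map_le _ _
  have hZAeq : finrank ℚ (Zsp th hd A) = k := by omega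
  -- injectivity of rhoQ on the cycle space of A
  have hinj : ∀ x ∈ Zsp th hd A, rhoQ γ x = 0 → x = 0 := by
    set g := (rhoQ γ).comp (Zsp th hd A).subtype with hg
    have hrg : LinearMap.range g = Submodule.map (rhoQ γ) (Zsp th hd A) := by
      rw [hg, LinearMap.range_comp, Submodule.range_subtype]
    have hrn := LinearMap.finrank_range_add_finrank_ker g
    rw [hrg, hzrA, hZAeq] at hrn
    have hker0 : finrank ℚ (LinearMap.ker g) = 0 := by omega
    have hker : LinearMap.ker g = ⊥ := Submodule.finrank_eq_zero.mp hker0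
    intro x hx h0
    have hmem : (⟨x, hx⟩ : Zsp th hd A) ∈ LinearMap.ker g := by
      rw [LinearMap.mem_ker]
      exact h0
    rw [hker, Submodule.mem_bot] at hmem
    exact congrArg Subtype.val hmem
  have h1 : finrank ℚ (Submodule.map (rhoQ γ) (Zsp th hd (S ∩ A)))
      = finrank ℚ (Zsp th hd (S ∩ A)) :=
    finrank_map_eq_of_injOn _ _
      (fun x hx h0 => hinj x (Zsp_mono th hd inter_subset_right hx) h0)
  have h2 : finrank ℚ (Submodule.map (rhoQ γ) (Zsp th hd (S ∩ A)))
      ≤ finrank ℚ (Submodule.map (rhoQ γ) (Zsp th hd S)) :=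
    Submodule.finrank_mono (Submodule.map_mono (Zsp_mono th hd inter_subset_left))
  have h3 : finrank ℚ (Submodule.map (bdry th hd) (Supp (S ∩ A)))
      ≤ finrank ℚ (Submodule.map (bdry th hd) (Supp S)) :=
    Submodule.finrank_mono (Submodule.map_mono (Supp_mono inter_subset_left))
  have h4 := finrank_Zsp_add th hd (S ∩ A)
  rw [zrank_eq]
  omega

end Aux6
section Aux7
set_option linter.unusedSectionVars false
set_option linter.unusedVariables false
set_option maxHeartbeats 1000000
open Finset Module
open scoped Classical

variable {V E : Type} [Fintype V] [DecidableEq V] [Fintype E] [DecidableEq E]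

/-- Rank-nullity for a submodule. -/
lemma finrank_map_add_inf_ker {M N : Type*} [AddCommGroup M] [Module ℚ M]
    [AddCommGroup N] [Module ℚ N] (f : M →ₗ[ℚ] N) (p : Submodule ℚ M)
    [FiniteDimensional ℚ p] :
    finrank ℚ (Submodule.map f p) + finrank ℚ (p ⊓ LinearMap.ker f : Submodule ℚ M)
      = finrank ℚ p := by
  set g := f.comp p.subtype with hg
  have hrange : LinearMap.range g = Submodule.map f p := by
    rw [hg, LinearMap.range_comp, Submodule.range_subtype]
  have hker' : Submodule.map p.subtype (LinearMap.ker g) = p ⊓ LinearMap.ker f := by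
    rw [hg, LinearMap.ker_comp, Submodule.map_comap_subtype]
  have hker : finrank ℚ (LinearMap.ker g) = finrank ℚ (p ⊓ LinearMap.ker f : Submodule ℚ M) := by
    rw [← hker']
    exact (Submodule.equivMapOfInjective _ (Submodule.injective_subtype _) _).finrank_eq
  have := LinearMap.finrank_range_add_finrank_ker g
  rw [hrange, hker] at this
  exact this

lemma eqvgen_lift (th hd : E → V) (S : Finset E)
    {a b : {v : V // v ∈ verts th hd S}}
    (h : Relation.EqvGen (fun a b : {v : V // v ∈ verts th hd S} => adjS th hd S a.1 b.1) a b) :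
    Relation.EqvGen (adjS th hd S) a.1 b.1 := by
  induction h with
  | rel x y hxy => exact Relation.EqvGen.rel _ _ hxy
  | refl x => exact Relation.EqvGen.refl _
  | symm x y h ih => exact Relation.EqvGen.symm _ _ ih
  | trans x y z h1 h2 ih1 ih2 => exact Relation.EqvGen.trans _ _ _ ih1 ih2

/-- Euler's formula: the rank of the boundary image equals `n' - c'`. -/
lemma euler_eq (th hd : E → V) (S : Finset E) :
    finrank ℚ (Submodule.map (bdry th hd) (Supp S)) + ncomp th hd S
      = (verts th hd S).card := by
  classical
  haveI : Finite (Quotient (Relation.EqvGen.setoid (fun a b : {v : V // v ∈ verts th hd S} => adjS th hd S a.1 b.1))) := Quotient.finite _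
  haveI : Fintype (Quotient (Relation.EqvGen.setoid (fun a b : {v : V // v ∈ verts th hd S} => adjS th hd S a.1 b.1))) := Fintype.ofFinite _
  set r : (V → ℚ) →ₗ[ℚ] ({v : V // v ∈ verts th hd S} → ℚ) :=
    LinearMap.funLeft ℚ ℚ Subtype.val with hr
  have hinj : ∀ y ∈ Submodule.map (bdry th hd) (Supp S), r y = 0 → y = 0 := by
    rintro _ ⟨x, hx, rfl⟩ h0
    funext v
    by_cases hv : v ∈ verts th hd S
    · exact congrFun h0 ⟨v, hv⟩
    · exact bdry_supported th hd S x hx v hv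
  have heq : finrank ℚ (Submodule.map r (Submodule.map (bdry th hd) (Supp S)))
      = finrank ℚ (Submodule.map (bdry th hd) (Supp S)) :=
    finrank_map_eq_of_injOn r _ hinj
  -- the two inclusions
  have hle : Submodule.map r (Submodule.map (bdry th hd) (Supp S))
      ≤ LinearMap.ker (sigmaMap th hd S) := by
    rintro _ ⟨_, ⟨x, hx, rfl⟩, rfl⟩
    rw [LinearMap.mem_ker]
    funext q
    show (∑ t, if Quotient.mk _ t = q then (bdry th hd x) t.1 else 0) = 0
    have hswap : (∑ t : {v : V // v ∈ verts th hd S}, if Quotient.mk _ t = q then (bdry th hd x) t.1 else 0)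
        = ∑ e, x e * (∑ t : {v : V // v ∈ verts th hd S},
            if Quotient.mk _ t = q then (incid th hd e t.1 : ℚ) else 0) := by
      have step1 : (∑ t : {v : V // v ∈ verts th hd S}, if Quotient.mk _ t = q then (bdry th hd x) t.1 else 0)
          = ∑ t : {v : V // v ∈ verts th hd S}, ∑ e,
              (if Quotient.mk _ t = q then x e * (incid th hd e t.1 : ℚ) else 0) := by
        refine Finset.sum_congr rfl (fun t _ => ?_)
        by_cases h : Quotient.mk _ t = q
        · rw [if_pos h]
          show (∑ e, x e * (incid th hd e t.1 : ℚ)) = _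
          exact Finset.sum_congr rfl (fun e _ => (if_pos h).symm)
        · rw [if_neg h]
          exact (Finset.sum_eq_zero (fun e _ => if_neg h)).symm
      rw [step1, Finset.sum_comm]
      refine Finset.sum_congr rfl (fun e _ => ?_)
      rw [Finset.mul_sum]
      refine Finset.sum_congr rfl (fun t _ => ?_)
      split <;> simp
    rw [hswap]
    refine Finset.sum_eq_zero (fun e _ => ?_)
    by_cases he : e ∈ S
    · rw [sum_incid_class th hd S e he q, mul_zero]
    · rw [hx e he, zero_mul]
  have hge : LinearMap.ker (sigmaMap th hd S)
      ≤ Submodule.map r (Submodule.map (bdry th hd) (Supp S)) := by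
    intro f hf
    have hf0 : ∀ q : Quotient (Relation.EqvGen.setoid (fun a b : {v : V // v ∈ verts th hd S} => adjS th hd S a.1 b.1)), (∑ t : {v : V // v ∈ verts th hd S}, if Quotient.mk (Relation.EqvGen.setoid (fun a b : {v : V // v ∈ verts th hd S} => adjS th hd S a.1 b.1)) t = q then f t else 0) = 0 := by
      intro q
      exact congrFun (LinearMap.mem_ker.mp hf) q
    set D : {v : V // v ∈ verts th hd S} → ({v : V // v ∈ verts th hd S} → ℚ) := fun t s =>
      (if t.1 = s.1 then (1:ℚ) else 0)
        - (if ((Quotient.mk (Relation.EqvGen.setoid (fun a b : {v : V // v ∈ verts th hd S} => adjS th hd S a.1 b.1)) t).out).1 = s.1 then 1 else 0) with hD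
    have hDmem : ∀ t : {v : V // v ∈ verts th hd S}, D t ∈ Submodule.map r (Submodule.map (bdry th hd) (Supp S)) := by
      intro t
      have hrel : Relation.EqvGen (adjS th hd S) ((Quotient.mk (Relation.EqvGen.setoid (fun a b : {v : V // v ∈ verts th hd S} => adjS th hd S a.1 b.1)) t).out).1 t.1 := by
        apply eqvgen_lift th hd S
        have : (Quotient.mk (Relation.EqvGen.setoid (fun a b : {v : V // v ∈ verts th hd S} => adjS th hd S a.1 b.1)) ((Quotient.mk (Relation.EqvGen.setoid (fun a b : {v : V // v ∈ verts th hd S} => adjS th hd S a.1 b.1)) t).out)) = Quotient.mk (Relation.EqvGen.setoid (fun a b : {v : V // v ∈ verts th hd S} => adjS th hd S a.1 b.1)) t :=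
          Quotient.out_eq _
        exact Quotient.exact this
      have hmem := delta_mem th hd S hrel
      refine ⟨_, hmem, ?_⟩
      funext s
      rfl
    have hdecomp : f = ∑ t : {v : V // v ∈ verts th hd S}, f t • D t := by
      funext s
      rw [Finset.sum_apply]
      have hterm : ∀ t : {v : V // v ∈ verts th hd S}, (f t • D t) s
          = (if t = s then f t else 0) - f t * (if (Quotient.mk (Relation.EqvGen.setoid (fun a b : {v : V // v ∈ verts th hd S} => adjS th hd S a.1 b.1)) t).out = s then 1 else 0) := by
        intro t
        rw [hD]
        simp only [Pi.smul_apply, smul_eq_mul, mul_sub]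
        congr 1
        · by_cases h : t = s
          · rw [if_pos h, if_pos (congrArg Subtype.val h), mul_one]
          · rw [if_neg h, if_neg (fun hc => h (Subtype.ext hc)), mul_zero]
        · by_cases h : (Quotient.mk (Relation.EqvGen.setoid (fun a b : {v : V // v ∈ verts th hd S} => adjS th hd S a.1 b.1)) t).out = s
          · rw [if_pos h, if_pos (congrArg Subtype.val h)]
          · rw [if_neg h, if_neg (fun hc => h (Subtype.ext hc))]
      rw [Finset.sum_congr rfl (fun t _ => hterm t), Finset.sum_sub_distrib]
      rw [Finset.sum_ite_eq' Finset.univ s f, if_pos (mem_univ s)]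
      have hsecond : (∑ t : {v : V // v ∈ verts th hd S}, f t * (if (Quotient.mk (Relation.EqvGen.setoid (fun a b : {v : V // v ∈ verts th hd S} => adjS th hd S a.1 b.1)) t).out = s then (1:ℚ) else 0)) = 0 := by
        rw [← Finset.sum_fiberwise Finset.univ (fun t : {v : V // v ∈ verts th hd S} => Quotient.mk (Relation.EqvGen.setoid (fun a b : {v : V // v ∈ verts th hd S} => adjS th hd S a.1 b.1)) t)
          (fun t : {v : V // v ∈ verts th hd S} => f t * (if (Quotient.mk (Relation.EqvGen.setoid (fun a b : {v : V // v ∈ verts th hd S} => adjS th hd S a.1 b.1)) t).out = s then (1:ℚ) else 0))]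
        refine Finset.sum_eq_zero (fun q _ => ?_)
        have : ∀ t ∈ Finset.univ.filter (fun t : {v : V // v ∈ verts th hd S} => Quotient.mk (Relation.EqvGen.setoid (fun a b : {v : V // v ∈ verts th hd S} => adjS th hd S a.1 b.1)) t = q),
            f t * (if (Quotient.mk (Relation.EqvGen.setoid (fun a b : {v : V // v ∈ verts th hd S} => adjS th hd S a.1 b.1)) t).out = s then (1:ℚ) else 0)
            = (if Quotient.mk (Relation.EqvGen.setoid (fun a b : {v : V // v ∈ verts th hd S} => adjS th hd S a.1 b.1)) t = q then f t else 0) * (if q.out = s then 1 else 0) := by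
          intro t ht
          have hq := (Finset.mem_filter.mp ht).2
          rw [hq, if_pos rfl]
        rw [Finset.sum_congr rfl this, ← Finset.sum_mul]
        have : (∑ t ∈ Finset.univ.filter (fun t : {v : V // v ∈ verts th hd S} => Quotient.mk (Relation.EqvGen.setoid (fun a b : {v : V // v ∈ verts th hd S} => adjS th hd S a.1 b.1)) t = q),
            (if Quotient.mk (Relation.EqvGen.setoid (fun a b : {v : V // v ∈ verts th hd S} => adjS th hd S a.1 b.1)) t = q then f t else 0))
            = ∑ t : {v : V // v ∈ verts th hd S}, (if Quotient.mk (Relation.EqvGen.setoid (fun a b : {v : V // v ∈ verts th hd S} => adjS th hd S a.1 b.1)) t = q then f t else 0) := by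
          refine Finset.sum_subset (Finset.filter_subset _ _) ?_
          intro t _ ht
          rw [if_neg]
          intro hc
          exact ht (Finset.mem_filter.mpr ⟨mem_univ t, hc⟩)
        rw [this, hf0 q, zero_mul]
      rw [hsecond, sub_zero]
    rw [hdecomp]
    exact Submodule.sum_mem _ (fun t _ => Submodule.smul_mem _ _ (hDmem t))
  have hkereq : Submodule.map r (Submodule.map (bdry th hd) (Supp S))
      = LinearMap.ker (sigmaMap th hd S) := le_antisymm hle hge
  have hrn := LinearMap.finrank_range_add_finrank_ker (sigmaMap th hd S)
  rw [sigmaMap_surj, finrank_top] at hrn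
  have hpi1 : finrank ℚ ((Quotient (Relation.EqvGen.setoid
      (fun a b : {v : V // v ∈ verts th hd S} => adjS th hd S a.1 b.1))) → ℚ)
      = ncomp th hd S := by
    rw [Module.finrank_pi, ncomp, Nat.card_eq_fintype_card]
  have hpi2 : finrank ℚ ({v : V // v ∈ verts th hd S} → ℚ) = (verts th hd S).card := by
    rw [Module.finrank_pi]
    exact Fintype.card_coe _
  rw [← heq, hkereq]
  omega

end Aux7
section Rado
set_option linter.unusedSectionVars false
set_option linter.unusedVariables false
set_option maxHeartbeats 1000000
open Finset Module

variable {ι F W : Type} [Fintype ι] [DecidableEq ι] [Fintype F] [DecidableEq F]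
  [AddCommGroup W] [Module ℚ W]

lemma rado_aux (n : ℕ) :
    ∀ (X : ι → Finset F) (v : F → W), (∑ i, (X i).card) ≤ n →
    (∀ S : Finset ι, S.card ≤ finrank ℚ (Submodule.span ℚ (v '' ((S.biUnion X : Finset F) : Set F)))) →
    ∃ φ : ι → F, (∀ i, φ i ∈ X i) ∧ LinearIndependent ℚ (fun i => v (φ i)) := by
  induction n with
  | zero =>
    intro X v hsum hcond
    rcases isEmpty_or_nonempty ι with hι | hι
    · exact ⟨isEmptyElim, fun i => isEmptyElim i, linearIndependent_empty_type⟩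
    obtain ⟨i⟩ := hι
    have h1 := hcond {i}
    have hXi : X i = ∅ := by
      have h := Finset.single_le_sum (f := fun j => (X j).card) (fun j _ => Nat.zero_le _)
        (mem_univ i)
      have h' : (X i).card ≤ ∑ j, (X j).card := h
      exact Finset.card_eq_zero.mp (by omega)
    rw [Finset.singleton_biUnion, hXi] at h1
    rw [Finset.card_singleton, Finset.coe_empty, Set.image_empty, Submodule.span_empty,
      finrank_bot] at h1
    exact absurd h1 (by omega)
  | succ n ih =>
    intro X v hsum hcond
    by_cases hbig : ∃ i0, 1 < (X i0).card
    · obtain ⟨i0, hi0⟩ := hbig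
      obtain ⟨x, hx, x', hx', hxx'⟩ := Finset.one_lt_card.mp hi0
      have hsumsplit : (∑ i, (X i).card)
          = (X i0).card + ∑ i ∈ Finset.univ.erase i0, (X i).card :=
        (Finset.add_sum_erase _ _ (mem_univ i0)).symm
      have hsum_update : ∀ (E : Finset F),
          (∑ i, ((Function.update X i0 E) i).card)
            = E.card + ∑ i ∈ Finset.univ.erase i0, (X i).card := by
        intro E
        have hfun : ∀ i, ((Function.update X i0 E) i).card
            = Function.update (fun j => (X j).card) i0 E.card i := by
          intro i
          by_cases h : i = i0
          · subst h; simp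
          · simp [Function.update_of_ne h]
        rw [Finset.sum_congr rfl (fun i _ => hfun i)]
        rw [← Finset.add_sum_erase _ _ (mem_univ i0), Function.update_self]
        congr 1
        refine Finset.sum_congr rfl (fun i hi => ?_)
        rw [Function.update_of_ne (Finset.ne_of_mem_erase hi)]
      by_cases hc1 : ∀ S : Finset ι, S.card ≤ finrank ℚ (Submodule.span ℚ
          (v '' ((S.biUnion (Function.update X i0 ((X i0).erase x)) : Finset F) : Set F)))
      · obtain ⟨φ, hφ, hind⟩ := ih (Function.update X i0 ((X i0).erase x)) v
          (by rw [hsum_update, Finset.card_erase_of_mem hx]; omega) hc1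
        refine ⟨φ, fun i => ?_, hind⟩
        have hm := hφ i
        by_cases h : i = i0
        · subst h; rw [Function.update_self] at hm; exact Finset.mem_of_mem_erase hm
        · rwa [Function.update_of_ne h] at hm
      by_cases hc2 : ∀ S : Finset ι, S.card ≤ finrank ℚ (Submodule.span ℚ
          (v '' ((S.biUnion (Function.update X i0 ((X i0).erase x')) : Finset F) : Set F)))
      · obtain ⟨φ, hφ, hind⟩ := ih (Function.update X i0 ((X i0).erase x')) v
          (by rw [hsum_update, Finset.card_erase_of_mem hx']; omega) hc2
        refine ⟨φ, fun i => ?_, hind⟩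
        have hm := hφ i
        by_cases h : i = i0
        · subst h; rw [Function.update_self] at hm; exact Finset.mem_of_mem_erase hm
        · rwa [Function.update_of_ne h] at hm
      · exfalso
        push_neg at hc1 hc2
        obtain ⟨S1, hS1⟩ := hc1
        obtain ⟨S2, hS2⟩ := hc2
        set X1 := Function.update X i0 ((X i0).erase x) with hX1
        set X2 := Function.update X i0 ((X i0).erase x') with hX2
        have hi0S1 : i0 ∈ S1 := by
          by_contra h
          have heq : S1.biUnion X1 = S1.biUnion X :=
            Finset.biUnion_congr rfl (fun i hi => by
              rw [hX1, Function.update_of_ne (fun hc => h (by rw [← hc]; exact hi))])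
          rw [heq] at hS1
          exact absurd (hcond S1) (not_le.mpr hS1)
        have hi0S2 : i0 ∈ S2 := by
          by_contra h
          have heq : S2.biUnion X2 = S2.biUnion X :=
            Finset.biUnion_congr rfl (fun i hi => by
              rw [hX2, Function.update_of_ne (fun hc => h (by rw [← hc]; exact hi))])
          rw [heq] at hS2
          exact absurd (hcond S2) (not_le.mpr hS2)
        set T1 := S1.erase i0 with hT1
        set T2 := S2.erase i0 with hT2
        set P1 := Submodule.span ℚ (v '' ((S1.biUnion X1 : Finset F) : Set F)) with hP1
        set P2 := Submodule.span ℚ (v '' ((S2.biUnion X2 : Finset F) : Set F)) with hP2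
        haveI : FiniteDimensional ℚ P1 :=
          FiniteDimensional.span_of_finite ℚ ((S1.biUnion X1).finite_toSet.image v)
        haveI : FiniteDimensional ℚ P2 :=
          FiniteDimensional.span_of_finite ℚ ((S2.biUnion X2).finite_toSet.image v)
        haveI : FiniteDimensional ℚ (P1 ⊔ P2 : Submodule ℚ W) :=
          Submodule.finiteDimensional_sup P1 P2
        -- union bound
        have hA : ((insert i0 (T1 ∪ T2)).biUnion X : Finset F)
            ⊆ S1.biUnion X1 ∪ S2.biUnion X2 := by
          rw [Finset.biUnion_subset]
          intro i hi
          rcases Finset.mem_insert.mp hi with rfl | hi'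
          · intro y hy
            by_cases hyx : y = x
            · refine Finset.mem_union_right _ (Finset.mem_biUnion.mpr ⟨i, hi0S2, ?_⟩)
              rw [hX2, Function.update_self]
              exact Finset.mem_erase.mpr ⟨by rw [hyx]; exact hxx', hy⟩
            · refine Finset.mem_union_left _ (Finset.mem_biUnion.mpr ⟨i, hi0S1, ?_⟩)
              rw [hX1, Function.update_self]
              exact Finset.mem_erase.mpr ⟨hyx, hy⟩
          · rcases Finset.mem_union.mp hi' with h1 | h2
            · intro y hy
              refine Finset.mem_union_left _ (Finset.mem_biUnion.mpr
                ⟨i, Finset.mem_of_mem_erase h1, ?_⟩)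
              rw [hX1, Function.update_of_ne (Finset.ne_of_mem_erase h1)]
              exact hy
            · intro y hy
              refine Finset.mem_union_right _ (Finset.mem_biUnion.mpr
                ⟨i, Finset.mem_of_mem_erase h2, ?_⟩)
              rw [hX2, Function.update_of_ne (Finset.ne_of_mem_erase h2)]
              exact hy
        have hsub : Submodule.span ℚ
            (v '' (((insert i0 (T1 ∪ T2)).biUnion X : Finset F) : Set F)) ≤ P1 ⊔ P2 := by
          rw [hP1, hP2, ← Submodule.span_union]
          apply Submodule.span_mono
          rw [← Set.image_union]
          apply Set.image_mono
          intro y hy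
          rw [Finset.mem_coe] at hy
          have h2 := hA hy
          rw [← Finset.coe_union]
          exact Finset.mem_coe.mpr h2
        have hrank_union : (insert i0 (T1 ∪ T2)).card
            ≤ finrank ℚ (P1 ⊔ P2 : Submodule ℚ W) :=
          le_trans (hcond _) (Submodule.finrank_mono hsub)
        -- intersection bound
        have hsub2 : Submodule.span ℚ
            (v '' (((T1 ∩ T2).biUnion X : Finset F) : Set F)) ≤ P1 ⊓ P2 := by
          refine le_inf ?_ ?_
          · rw [hP1]
            apply Submodule.span_mono
            apply Set.image_mono
            intro y hy
            rw [Finset.mem_coe, Finset.mem_biUnion] at hy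
            obtain ⟨i, hi, hyi⟩ := hy
            have hiT1 : i ∈ T1 := (Finset.mem_inter.mp hi).1
            refine Finset.mem_coe.mpr (Finset.mem_biUnion.mpr
              ⟨i, Finset.mem_of_mem_erase hiT1, ?_⟩)
            rw [hX1, Function.update_of_ne (Finset.ne_of_mem_erase hiT1)]
            exact hyi
          · rw [hP2]
            apply Submodule.span_mono
            apply Set.image_mono
            intro y hy
            rw [Finset.mem_coe, Finset.mem_biUnion] at hy
            obtain ⟨i, hi, hyi⟩ := hy
            have hiT2 : i ∈ T2 := (Finset.mem_inter.mp hi).2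
            refine Finset.mem_coe.mpr (Finset.mem_biUnion.mpr
              ⟨i, Finset.mem_of_mem_erase hiT2, ?_⟩)
            rw [hX2, Function.update_of_ne (Finset.ne_of_mem_erase hiT2)]
            exact hyi
        have hrank_inter : (T1 ∩ T2).card ≤ finrank ℚ (P1 ⊓ P2 : Submodule ℚ W) :=
          le_trans (hcond _) (Submodule.finrank_mono hsub2)
        have hsubmod := Submodule.finrank_sup_add_finrank_inf_eq P1 P2
        have hT1card : T1.card = S1.card - 1 := Finset.card_erase_of_mem hi0S1
        have hT2card : T2.card = S2.card - 1 := Finset.card_erase_of_mem hi0S2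
        have hS1pos : 0 < S1.card := Finset.card_pos.mpr ⟨i0, hi0S1⟩
        have hS2pos : 0 < S2.card := Finset.card_pos.mpr ⟨i0, hi0S2⟩
        have hins : (insert i0 (T1 ∪ T2)).card = (T1 ∪ T2).card + 1 := by
          rw [Finset.card_insert_of_notMem]
          intro hc
          rcases Finset.mem_union.mp hc with h | h
          · exact (Finset.ne_of_mem_erase h) rfl
          · exact (Finset.ne_of_mem_erase h) rfl
        have hUI := Finset.card_union_add_card_inter T1 T2
        omega
    · -- all |X i| ≤ 1
      push_neg at hbig
      have hone : ∀ i, ∃ a, X i = {a} := by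
        intro i
        have h1 := hcond {i}
        rw [Finset.singleton_biUnion] at h1
        have hne : X i ≠ ∅ := by
          rintro he
          rw [he, Finset.coe_empty, Set.image_empty, Submodule.span_empty,
            finrank_bot, Finset.card_singleton] at h1
          omega
        exact Finset.card_eq_one.mp
          (le_antisymm (hbig i) (Finset.card_pos.mpr (Finset.nonempty_of_ne_empty hne)))
      choose a ha using hone
      refine ⟨a, fun i => by rw [ha i]; exact Finset.mem_singleton_self _, ?_⟩
      rw [linearIndependent_iff_card_le_finrank_span]
      have h := hcond Finset.univ
      have heq : (Finset.univ.biUnion X : Finset F) = Finset.univ.image a := by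
        ext y
        constructor
        · intro hy
          obtain ⟨i, -, hyi⟩ := Finset.mem_biUnion.mp hy
          rw [ha i, Finset.mem_singleton] at hyi
          exact Finset.mem_image.mpr ⟨i, mem_univ i, hyi.symm⟩
        · intro hy
          obtain ⟨i, -, rfl⟩ := Finset.mem_image.mp hy
          exact Finset.mem_biUnion.mpr ⟨i, mem_univ i, by
            rw [ha i]; exact Finset.mem_singleton_self _⟩
      rw [heq] at h
      have him : (v '' ((Finset.univ.image a : Finset F) : Set F))
          = Set.range (fun i => v (a i)) := by
        rw [Finset.coe_image, Finset.coe_univ, Set.image_univ, ← Set.range_comp]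
        rfl
      rw [him] at h
      rw [Finset.card_univ] at h
      exact h

lemma rado (X : ι → Finset F) (v : F → W)
    (hcond : ∀ S : Finset ι, S.card ≤ finrank ℚ (Submodule.span ℚ
      (v '' ((S.biUnion X : Finset F) : Set F)))) :
    ∃ φ : ι → F, (∀ i, φ i ∈ X i) ∧ LinearIndependent ℚ (fun i => v (φ i)) :=
  rado_aux (∑ i, (X i).card) X v le_rfl hcond

end Rado
section Apply
set_option linter.unusedSectionVars false
set_option linter.unusedVariables false
set_option maxHeartbeats 1000000
open Finset Module

variable {V E : Type} [Fintype V] [DecidableEq V] [Fintype E] [DecidableEq E]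

/-- The fixed subspace of colorless cycles. -/
noncomputable def Kk (th hd : E → V) (γ : E → ℤ × ℤ) : Submodule ℚ (E → ℚ) :=
  LinearMap.ker (bdry th hd) ⊓ LinearMap.ker (rhoQ γ)

/-- Indicator chain of an edge. -/
def chi (e : E) : E → ℚ := fun e' => if e' = e then 1 else 0

/-- The matroid vectors: images of indicator chains in the quotient. -/
noncomputable def wvec (th hd : E → V) (γ : E → ℤ × ℤ) (e : E) : (E → ℚ) ⧸ Kk th hd γ :=
  (Kk th hd γ).mkQ (chi e)

lemma span_chi (S : Finset E) :
    Submodule.span ℚ ((chi : E → E → ℚ) '' ↑S) = Supp S := by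
  apply le_antisymm
  · rw [Submodule.span_le]
    rintro _ ⟨e, he, rfl⟩
    intro e' he'
    show (if e' = e then (1:ℚ) else 0) = 0
    rw [if_neg]
    rintro rfl
    exact he' (Finset.mem_coe.mp he)
  · intro x hx
    have hrep : x = ∑ e ∈ S, x e • chi e := by
      funext e'
      rw [Finset.sum_apply]
      have : ∀ e ∈ S, (x e • chi e) e' = if e' = e then x e else 0 := by
        intro e _
        show x e * (if e' = e then (1:ℚ) else 0) = _
        by_cases h : e' = e <;> simp [h]
      rw [Finset.sum_congr rfl this, Finset.sum_ite_eq S e' x]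
      by_cases h : e' ∈ S
      · rw [if_pos h]
      · rw [if_neg h, hx e' h]
    rw [hrep]
    exact Submodule.sum_mem _ (fun e he => Submodule.smul_mem _ _
      (Submodule.subset_span ⟨e, he, rfl⟩))

lemma span_w (th hd : E → V) (γ : E → ℤ × ℤ) (S : Finset E) :
    Submodule.span ℚ (wvec th hd γ '' ↑S)
      = Submodule.map (Kk th hd γ).mkQ (Supp S) := by
  have him : wvec th hd γ '' ↑S = (Kk th hd γ).mkQ '' ((chi : E → E → ℚ) '' ↑S) := by
    rw [Set.image_image]
    rfl
  rw [him, Submodule.span_image, span_chi]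

lemma rank_w (th hd : E → V) (γ : E → ℤ × ℤ) (S : Finset E) :
    finrank ℚ (Submodule.span ℚ (wvec th hd γ '' ↑S))
      + finrank ℚ (Zsp th hd S ⊓ LinearMap.ker (rhoQ γ) : Submodule ℚ (E → ℚ))
      = S.card := by
  rw [span_w]
  have h := finrank_map_add_inf_ker (Kk th hd γ).mkQ (Supp S)
  rw [Submodule.ker_mkQ, finrank_Supp] at h
  have hinf : Supp S ⊓ Kk th hd γ
      = Zsp th hd S ⊓ LinearMap.ker (rhoQ γ) := by
    rw [Kk, Zsp, inf_assoc]
  rw [hinf] at h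
  exact h

lemma defect (th hd : E → V) (γ : E → ℤ × ℤ) (S : Finset E) :
    zrank th hd γ S
      + finrank ℚ (Zsp th hd S ⊓ LinearMap.ker (rhoQ γ) : Submodule ℚ (E → ℚ))
      = finrank ℚ (Zsp th hd S) := by
  rw [zrank_eq]
  exact finrank_map_add_inf_ker (rhoQ γ) (Zsp th hd S)

/-- Doubled vectors in the product space. -/
noncomputable def dvec (th hd : E → V) (γ : E → ℤ × ℤ) (p : E × Bool) :
    ((E → ℚ) ⧸ Kk th hd γ) × ((E → ℚ) ⧸ Kk th hd γ) :=
  if p.2 then (wvec th hd γ p.1, 0) else (0, wvec th hd γ p.1)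

/-- The two candidate copies for each edge. -/
def Xpair : E → Finset (E × Bool) := fun e => {(e, true), (e, false)}

lemma double_span (th hd : E → V) (γ : E → ℤ × ℤ) (S : Finset E) :
    finrank ℚ (Submodule.span ℚ (dvec th hd γ '' ↑(S.biUnion Xpair)))
      = 2 * finrank ℚ (Submodule.span ℚ (wvec th hd γ '' ↑S)) := by
  classical
  set P := Submodule.span ℚ (wvec th hd γ '' ↑S) with hP
  have hset : dvec th hd γ '' ↑(S.biUnion Xpair)
      = (⇑(LinearMap.inl ℚ ((E → ℚ) ⧸ Kk th hd γ) ((E → ℚ) ⧸ Kk th hd γ)) '' (wvec th hd γ '' ↑S))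
        ∪ (⇑(LinearMap.inr ℚ ((E → ℚ) ⧸ Kk th hd γ) ((E → ℚ) ⧸ Kk th hd γ)) '' (wvec th hd γ '' ↑S)) := by
    ext z
    constructor
    · rintro ⟨p, hp, rfl⟩
      rw [Finset.mem_coe, Finset.mem_biUnion] at hp
      obtain ⟨e, he, hpe⟩ := hp
      rcases Finset.mem_insert.mp hpe with rfl | hpe'
      · exact Or.inl ⟨wvec th hd γ e, ⟨e, Finset.mem_coe.mpr he, rfl⟩, by
          simp [dvec]⟩
      · rw [Finset.mem_singleton] at hpe'
        subst hpe'
        exact Or.inr ⟨wvec th hd γ e, ⟨e, Finset.mem_coe.mpr he, rfl⟩, by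
          simp [dvec]⟩
    · rintro (⟨_, ⟨e, he, rfl⟩, rfl⟩ | ⟨_, ⟨e, he, rfl⟩, rfl⟩)
      · refine ⟨(e, true), ?_, by simp [dvec]⟩
        rw [Finset.mem_coe, Finset.mem_biUnion]
        exact ⟨e, Finset.mem_coe.mp he, Finset.mem_insert_self _ _⟩
      · refine ⟨(e, false), ?_, by simp [dvec]⟩
        rw [Finset.mem_coe, Finset.mem_biUnion]
        exact ⟨e, Finset.mem_coe.mp he,
          Finset.mem_insert_of_mem (Finset.mem_singleton_self _)⟩
  rw [hset, Submodule.span_union, Submodule.span_image, Submodule.span_image, ← hP]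
  have hinf : (Submodule.map (LinearMap.inl ℚ ((E → ℚ) ⧸ Kk th hd γ) ((E → ℚ) ⧸ Kk th hd γ)) P)
      ⊓ (Submodule.map (LinearMap.inr ℚ ((E → ℚ) ⧸ Kk th hd γ) ((E → ℚ) ⧸ Kk th hd γ)) P) = ⊥ := by
    rw [eq_bot_iff]
    rintro z ⟨⟨a, ha, hza⟩, ⟨b, hb, hzb⟩⟩
    have h1 : z.2 = 0 := by rw [← hza]; rfl
    have h2 : z.1 = 0 := by rw [← hzb]; rfl
    rw [Submodule.mem_bot]
    exact Prod.ext h2 h1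
  have hsum := Submodule.finrank_sup_add_finrank_inf_eq
    (Submodule.map (LinearMap.inl ℚ ((E → ℚ) ⧸ Kk th hd γ) ((E → ℚ) ⧸ Kk th hd γ)) P) (Submodule.map (LinearMap.inr ℚ ((E → ℚ) ⧸ Kk th hd γ) ((E → ℚ) ⧸ Kk th hd γ)) P)
  rw [hinf, finrank_bot, add_zero] at hsum
  have hl : finrank ℚ (Submodule.map (LinearMap.inl ℚ ((E → ℚ) ⧸ Kk th hd γ) ((E → ℚ) ⧸ Kk th hd γ)) P) = finrank ℚ P :=
    finrank_map_eq_of_injOn _ _ (fun x hx h0 => by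
      have := congrArg Prod.fst h0
      exact this)
  have hr : finrank ℚ (Submodule.map (LinearMap.inr ℚ ((E → ℚ) ⧸ Kk th hd γ) ((E → ℚ) ⧸ Kk th hd γ)) P) = finrank ℚ P :=
    finrank_map_eq_of_injOn _ _ (fun x hx h0 => by
      have := congrArg Prod.snd h0
      exact this)
  rw [hsum, hl, hr]
  ring

end Apply
section Forward
set_option linter.unusedSectionVars false
set_option linter.unusedVariables false
set_option maxHeartbeats 1000000
open Finset Module

variable {V E : Type} [Fintype V] [DecidableEq V] [Fintype E] [DecidableEq E]

lemma zrank_mono (th hd : E → V) (γ : E → ℤ × ℤ) {S T : Finset E} (h : S ⊆ T) :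
    zrank th hd γ S ≤ zrank th hd γ T := by
  rw [zrank_eq, zrank_eq]
  exact Submodule.finrank_mono (Submodule.map_mono (Zsp_mono th hd h))

lemma bd_succ_le (th hd : E → V) (S : Finset E) [Nonempty V] :
    finrank ℚ (Submodule.map (bdry th hd) (Supp S)) + 1 ≤ Fintype.card V := by
  classical
  have h4 := euler_eq th hd S
  have hle := Finset.card_le_univ (verts th hd S)
  by_cases hv : verts th hd S = ∅
  · rw [hv, Finset.card_empty] at h4
    have : 0 < Fintype.card V := Fintype.card_pos
    omega
  · obtain ⟨v0, hv0⟩ := Finset.nonempty_of_ne_empty hv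
    haveI : Finite (Quotient (Relation.EqvGen.setoid
        (fun a b : {x : V // x ∈ verts th hd S} => adjS th hd S a.1 b.1))) :=
      Quotient.finite _
    haveI : Nonempty (Quotient (Relation.EqvGen.setoid
        (fun a b : {x : V // x ∈ verts th hd S} => adjS th hd S a.1 b.1))) :=
      ⟨Quotient.mk _ ⟨v0, hv0⟩⟩
    have hpos : 0 < ncomp th hd S := Nat.card_pos
    omega

lemma conn_of_bd (th hd : E → V) (S : Finset E)
    (hbd : finrank ℚ (Submodule.map (bdry th hd) (Supp S)) + 1 = Fintype.card V) :
    Conn th hd S := by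
  classical
  have h4 := euler_eq th hd S
  have hle := Finset.card_le_univ (verts th hd S)
  intro u v
  by_cases hv : verts th hd S = ∅
  · rw [hv, Finset.card_empty] at h4
    have hn1 : Fintype.card V = 1 := by omega
    haveI : Subsingleton V := Fintype.card_le_one_iff_subsingleton.mp (le_of_eq hn1)
    have huv : u = v := Subsingleton.elim u v
    rw [huv]
    exact Relation.EqvGen.refl v
  · obtain ⟨v0, hv0⟩ := Finset.nonempty_of_ne_empty hv
    haveI : Finite (Quotient (Relation.EqvGen.setoid
        (fun a b : {x : V // x ∈ verts th hd S} => adjS th hd S a.1 b.1))) :=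
      Quotient.finite _
    haveI : Nonempty (Quotient (Relation.EqvGen.setoid
        (fun a b : {x : V // x ∈ verts th hd S} => adjS th hd S a.1 b.1))) :=
      ⟨Quotient.mk _ ⟨v0, hv0⟩⟩
    have hpos : 0 < ncomp th hd S := Nat.card_pos
    have hnc : ncomp th hd S = 1 := by omega
    have hverts : verts th hd S = Finset.univ := Finset.eq_univ_of_card _ (by omega)
    have hu : u ∈ verts th hd S := by rw [hverts]; exact mem_univ u
    have hvm : v ∈ verts th hd S := by rw [hverts]; exact mem_univ v
    have hnc' : Nat.card (Quotient (Relation.EqvGen.setoid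
        (fun a b : {x : V // x ∈ verts th hd S} => adjS th hd S a.1 b.1))) = 1 := hnc
    haveI hsub : Subsingleton (Quotient (Relation.EqvGen.setoid
        (fun a b : {x : V // x ∈ verts th hd S} => adjS th hd S a.1 b.1))) :=
      (Nat.card_eq_one_iff_unique.mp hnc').1
    have heq : Quotient.mk (Relation.EqvGen.setoid
        (fun a b : {x : V // x ∈ verts th hd S} => adjS th hd S a.1 b.1)) ⟨u, hu⟩
        = Quotient.mk _ ⟨v, hvm⟩ := Subsingleton.elim _ _
    exact eqvgen_lift th hd S (Quotient.exact heq)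

lemma forward_dir (th hd : E → V) (γ : E → ℤ × ℤ) (k : ℕ)
    (hk : zrank th hd γ Finset.univ = k)
    (h1 : (Fintype.card E : ℤ) = 2 * Fintype.card V - 2 + 2 * k)
    (h2 : ∀ S : Finset E, (S.card : ℤ) ≤
        2 * ((verts th hd S).card : ℤ) - 2 + 2 * (zrank th hd γ S : ℤ)
          - 2 * ((ncomp th hd S : ℤ) - 1)) :
    (∃ A B : Finset E, A ∪ B = Finset.univ ∧ A ∩ B = ∅ ∧
      (Conn th hd A ∧ (A.card : ℤ) = (Fintype.card V : ℤ) - 1 + k ∧ zrank th hd γ A = k) ∧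
      (Conn th hd B ∧ (B.card : ℤ) = (Fintype.card V : ℤ) - 1 + k ∧ zrank th hd γ B = k)) := by
  classical
  rcases isEmpty_or_nonempty V with hV | hV
  · haveI hE : IsEmpty E := ⟨fun e => hV.false (th e)⟩
    have hk0 : zrank th hd γ (Finset.univ : Finset E) = 0 := zrank_of_isEmpty hE th hd γ _
    have hV0 : Fintype.card V = 0 := Fintype.card_eq_zero
    have hE0 : Fintype.card E = 0 := Fintype.card_eq_zero
    rw [hk0] at hk
    omega
  -- rank condition for Rado
  have hcond : ∀ S : Finset E, S.card ≤ finrank ℚ (Submodule.span ℚ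
      (dvec th hd γ '' ((S.biUnion Xpair : Finset (E × Bool)) : Set (E × Bool)))) := by
    intro S
    rw [double_span]
    have e1 := rank_w th hd γ S
    have e2 := defect th hd γ S
    have e3 := finrank_Zsp_add th hd S
    have e4 := euler_eq th hd S
    have e5 := h2 S
    omega
  obtain ⟨φ, hφ, hind⟩ := rado Xpair (dvec th hd γ) hcond
  set A := Finset.univ.filter (fun e => φ e = (e, true)) with hA
  set B := Finset.univ.filter (fun e => φ e = (e, false)) with hB
  have hφcases : ∀ e : E, φ e = (e, true) ∨ φ e = (e, false) := by
    intro e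
    have := hφ e
    rcases Finset.mem_insert.mp this with h | h
    · exact Or.inl h
    · exact Or.inr (Finset.mem_singleton.mp h)
  have hunion : A ∪ B = Finset.univ := by
    rw [Finset.eq_univ_iff_forall]
    intro e
    rcases hφcases e with h | h
    · exact Finset.mem_union_left _ (Finset.mem_filter.mpr ⟨mem_univ e, h⟩)
    · exact Finset.mem_union_right _ (Finset.mem_filter.mpr ⟨mem_univ e, h⟩)
  have hinter : A ∩ B = ∅ := by
    rw [Finset.eq_empty_iff_forall_notMem]
    intro e he
    have h1' := (Finset.mem_filter.mp (Finset.mem_inter.mp he).1).2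
    have h2' := (Finset.mem_filter.mp (Finset.mem_inter.mp he).2).2
    rw [h1'] at h2'
    exact Bool.noConfusion (congrArg Prod.snd h2')
  -- independence on each side
  have hsideA : A.card ≤ finrank ℚ (Submodule.span ℚ (wvec th hd γ '' ↑A)) := by
    have hres : LinearIndependent ℚ (fun a : {x // x ∈ A} => dvec th hd γ (φ a.1)) :=
      hind.comp _ Subtype.val_injective
    have hform : (fun a : {x // x ∈ A} => dvec th hd γ (φ a.1))
        = ⇑(LinearMap.inl ℚ ((E → ℚ) ⧸ Kk th hd γ) ((E → ℚ) ⧸ Kk th hd γ))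
          ∘ (fun a : {x // x ∈ A} => wvec th hd γ a.1) := by
      funext a
      have ha := (Finset.mem_filter.mp a.2).2
      rw [ha]
      simp [dvec]
    rw [hform] at hres
    have hindA := LinearIndependent.of_comp _ hres
    have h3 := linearIndependent_iff_card_le_finrank_span.mp hindA
    rw [Fintype.card_coe] at h3
    have hrange : Set.range (fun a : {x // x ∈ A} => wvec th hd γ a.1)
        = wvec th hd γ '' ↑A := by
      ext z
      constructor
      · rintro ⟨a, rfl⟩
        exact ⟨a.1, Finset.mem_coe.mpr a.2, rfl⟩
      · rintro ⟨e, he, rfl⟩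
        exact ⟨⟨e, Finset.mem_coe.mp he⟩, rfl⟩
    rw [hrange] at h3
    exact h3
  have hsideB : B.card ≤ finrank ℚ (Submodule.span ℚ (wvec th hd γ '' ↑B)) := by
    have hres : LinearIndependent ℚ (fun a : {x // x ∈ B} => dvec th hd γ (φ a.1)) :=
      hind.comp _ Subtype.val_injective
    have hform : (fun a : {x // x ∈ B} => dvec th hd γ (φ a.1))
        = ⇑(LinearMap.inr ℚ ((E → ℚ) ⧸ Kk th hd γ) ((E → ℚ) ⧸ Kk th hd γ))
          ∘ (fun a : {x // x ∈ B} => wvec th hd γ a.1) := by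
      funext a
      have ha := (Finset.mem_filter.mp a.2).2
      rw [ha]
      simp [dvec]
    rw [hform] at hres
    have hindB := LinearIndependent.of_comp _ hres
    have h3 := linearIndependent_iff_card_le_finrank_span.mp hindB
    rw [Fintype.card_coe] at h3
    have hrange : Set.range (fun a : {x // x ∈ B} => wvec th hd γ a.1)
        = wvec th hd γ '' ↑B := by
      ext z
      constructor
      · rintro ⟨a, rfl⟩
        exact ⟨a.1, Finset.mem_coe.mpr a.2, rfl⟩
      · rintro ⟨e, he, rfl⟩
        exact ⟨⟨e, Finset.mem_coe.mp he⟩, rfl⟩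
    rw [hrange] at h3
    exact h3
  -- numerology
  have hdisj : Disjoint A B := Finset.disjoint_iff_inter_eq_empty.mpr hinter
  have hcardE : A.card + B.card = Fintype.card E := by
    rw [← Finset.card_union_of_disjoint hdisj, hunion, Finset.card_univ]
  have eA1 := rank_w th hd γ A
  have eA2 := defect th hd γ A
  have eA3 := finrank_Zsp_add th hd A
  have eA4 := bd_succ_le th hd A
  have eA5 := zrank_mono th hd γ (Finset.subset_univ A)
  rw [hk] at eA5
  have eB1 := rank_w th hd γ B
  have eB2 := defect th hd γ B
  have eB3 := finrank_Zsp_add th hd B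
  have eB4 := bd_succ_le th hd B
  have eB5 := zrank_mono th hd γ (Finset.subset_univ B)
  rw [hk] at eB5
  have hsA : finrank ℚ (Submodule.span ℚ (wvec th hd γ '' ↑A)) ≤ A.card := by omega
  have hsB : finrank ℚ (Submodule.span ℚ (wvec th hd γ '' ↑B)) ≤ B.card := by omega
  have hzA : zrank th hd γ A = k := by omega
  have hzB : zrank th hd γ B = k := by omega
  have hbdA : finrank ℚ (Submodule.map (bdry th hd) (Supp A)) + 1 = Fintype.card V := by
    omega
  have hbdB : finrank ℚ (Submodule.map (bdry th hd) (Supp B)) + 1 = Fintype.card V := by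
    omega
  exact ⟨A, B, hunion, hinter,
    ⟨conn_of_bd th hd A hbdA, by omega, hzA⟩,
    ⟨conn_of_bd th hd B hbdB, by omega, hzB⟩⟩

end Forward
/-- A ℤ²-colored multigraph of ℤ²-rank `k` is a `(2,2,k)`-graph (it has `2n − 2 + 2k` edges
and every edge-induced subgraph satisfies `m' ≤ 2n' − 2 + 2·rk_{ℤ²} − 2(c'−1)`) iff its edge
set is the disjoint union of two spanning `(1,1,k)`-graphs. -/
theorem statement10 {V E : Type} [Fintype V] [DecidableEq V] [Fintype E] [DecidableEq E]
    (th hd : E → V) (γ : E → ℤ × ℤ) (k : ℕ)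
    (hk : zrank th hd γ Finset.univ = k) :
    ((Fintype.card E : ℤ) = 2 * Fintype.card V - 2 + 2 * k ∧
      ∀ S : Finset E, (S.card : ℤ) ≤
        2 * ((verts th hd S).card : ℤ) - 2 + 2 * (zrank th hd γ S : ℤ)
          - 2 * ((ncomp th hd S : ℤ) - 1)) ↔
    (∃ A B : Finset E, A ∪ B = Finset.univ ∧ A ∩ B = ∅ ∧
      (Conn th hd A ∧ (A.card : ℤ) = (Fintype.card V : ℤ) - 1 + k ∧ zrank th hd γ A = k) ∧
      (Conn th hd B ∧ (B.card : ℤ) = (Fintype.card V : ℤ) - 1 + k ∧ zrank th hd γ B = k)) := by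
  constructor
  · rintro ⟨h1, h2⟩
    exact forward_dir th hd γ k hk h1 h2
  · rintro ⟨A, B, hunion, hinter, ⟨hAconn, hAcard, hAz⟩, ⟨hBconn, hBcard, hBz⟩⟩
    have hdisj : Disjoint A B := Finset.disjoint_iff_inter_eq_empty.mpr hinter
    have hcardE : A.card + B.card = Fintype.card E := by
      rw [← Finset.card_union_of_disjoint hdisj, hunion, Finset.card_univ]
    constructor
    · omega
    · intro S
      have hSsplit : (S ∩ A).card + (S ∩ B).card = S.card := by
        rw [← Finset.card_union_of_disjoint
          (hdisj.mono Finset.inter_subset_right Finset.inter_subset_right)]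
        rw [← Finset.inter_union_distrib_left, hunion, Finset.inter_univ]
      have h1 := side_bound th hd γ k A hAconn hAcard hAz S
      have h2 := side_bound th hd γ k B hBconn hBcard hBz S
      have h3 := comp_bound th hd S
      omega
end
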